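/- arXiv:2408.13045 — 5 statements merged into one kernel-verified Lean document; each statement's English description precedes it below -/
import Mathlib

section
/- Let π ∝ exp(-f) be a probability distribution on ℝ^d where f is α-strongly convex with minimizer (mode) x*. Then the second moment about the mode satisfies ∫ ‖x - x*‖² dπ(x) ≤ d/α. -/
open MeasureTheory Real Set Filter Topology

private theorem sm_lintegral_comp_affine (d : ℕ) (h : EuclideanSpace ℝ (Fin d) → ENNReal)
    (hm : Measurable h) (x0 : EuclideanSpace ℝ (Fin d)) (t : ℝ) (ht : 0 < t) :
    ∫⁻ x, h (x0 + t • (x - x0)) = ENNReal.ofReal ((t ^ d)⁻¹) * ∫⁻ x, h x := by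
  have step1 : ∫⁻ x, h (x0 + t • (x - x0)) = ∫⁻ x, h (x0 + t • x) := by
    have := lintegral_add_right_eq_self (μ := volume) (fun x => h (x0 + t • (x - x0))) x0
    rw [← this]
    congr 1; funext x; simp
  have step2 : ∫⁻ x, h (x0 + t • x) = ENNReal.ofReal ((t ^ d)⁻¹) * ∫⁻ x, h (x0 + x) := by
    have hG : Measurable fun y => h (x0 + y) := hm.comp (measurable_const_add x0)
    have hsm : Measurable fun x : EuclideanSpace ℝ (Fin d) => t • x := measurable_id.const_smul t
    rw [← lintegral_map hG hsm, Measure.map_addHaar_smul (μ := volume) (ne_of_gt ht),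
      lintegral_smul_measure]
    congr 2
    rw [finrank_euclideanSpace_fin, abs_of_nonneg (by positivity)]
  have step3 : ∫⁻ x, h (x0 + x) = ∫⁻ x, h x := lintegral_add_left_eq_self h x0
  rw [step1, step2, step3]

private theorem sm_bern (d : ℕ) (s : ℝ) (hs : 0 < s) : 1 - ((1+s)^d)⁻¹ ≤ s * d := by
  have h1 : (0:ℝ) < 1 + s := by linarith
  have key : 1 + (d:ℝ) * (-s/(1+s)) ≤ (1 + (-s/(1+s)))^d := by
    apply one_add_mul_le_pow
    have : -s/(1+s) ≥ -1 := by
      rw [ge_iff_le, neg_le, neg_div, neg_neg, div_le_one h1]; linarith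
    linarith
  have h2 : 1 + (-s/(1+s)) = (1+s)⁻¹ := by field_simp; ring
  rw [h2, inv_pow] at key
  have h4 : s/(1+s) ≤ s := div_le_self hs.le (by linarith)
  have h3 : -(s*(d:ℝ)) ≤ (d:ℝ) * (-s/(1+s)) := by
    rw [neg_div, mul_neg, neg_le_neg_iff]
    nlinarith [Nat.cast_nonneg (α := ℝ) d]
  linarith

private theorem sm_tend (c : ℝ) :
    Tendsto (fun n : ℕ => (1 - exp (-((1/((n:ℝ)+1)) * c))) / (1/((n:ℝ)+1))) atTop (𝓝 c) := by
  have hF : HasDerivAt (fun s : ℝ => 1 - exp (-(s * c))) c 0 := by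
    have h1 : HasDerivAt (fun s : ℝ => -(s * c)) (-c) 0 := by
      have := ((hasDerivAt_id' (0:ℝ)).mul_const c).neg
      simp only [one_mul] at this
      exact this
    have h2 := h1.exp
    have h3 := (hasDerivAt_const (0:ℝ) (1:ℝ)).sub h2
    norm_num at h3
    exact h3
  have hslope := hasDerivAt_iff_tendsto_slope.mp hF
  have hn : Tendsto (fun n : ℕ => 1/((n:ℝ)+1)) atTop (𝓝[≠] 0) := by
    rw [tendsto_nhdsWithin_iff]
    exact ⟨tendsto_one_div_add_atTop_nhds_zero_nat,
      Eventually.of_forall fun n => by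
        simp only [mem_compl_iff, mem_singleton_iff]
        positivity⟩
  have h := hslope.comp hn
  apply h.congr
  intro n
  rw [Function.comp_apply, slope_def_field]
  simp

/-- Second moment bound for strongly log-concave distributions:
if `f` is `α`-strongly convex with mode `x⋆` and `π ∝ exp (-f)`, then
`∫ ‖x - x⋆‖² dπ ≤ d / α`. -/
theorem second_moment_strongly_log_concave
    (d : ℕ) (α : ℝ) (hα : 0 < α)
    (f : EuclideanSpace ℝ (Fin d) → ℝ)
    (hstrong : ∀ x y, f x + inner ℝ (gradient f x) (y - x) + α / 2 * ‖y - x‖ ^ 2 ≤ f y)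
    (xstar : EuclideanSpace ℝ (Fin d))
    (hmode : ∀ x, f xstar ≤ f x)
    (Z : ℝ) (hZ : Z = ∫ x, Real.exp (-f x)) (hZpos : 0 < Z) :
    ∫ x, ‖x - xstar‖ ^ 2 * (Real.exp (-f x) / Z) ≤ d / α := by
  have hgradf : ∀ (x v : EuclideanSpace ℝ (Fin d)),
      (inner ℝ (gradient f x) v : ℝ) = fderiv ℝ f x v := by
    intro x v; rw [gradient]; exact InnerProductSpace.toDual_symm_apply
  -- continuity of f
  have hcont : Continuous f := by
    have hconv : ConvexOn ℝ univ f := by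
      refine ⟨convex_univ, fun x _ y _ a b ha hb hab => ?_⟩
      set z := a • x + b • y with hz
      have hx := hstrong z x
      have hy := hstrong z y
      have h1 : f z + inner ℝ (gradient f z) (x - z) ≤ f x := by nlinarith [sq_nonneg ‖x - z‖]
      have h2 : f z + inner ℝ (gradient f z) (y - z) ≤ f y := by nlinarith [sq_nonneg ‖y - z‖]
      have key : a • (x - z) + b • (y - z) = 0 := by
        have h : a • (x - z) + b • (y - z) = (a • x + b • y) - (a + b) • z := by
          simp only [hz]; module
        rw [h, hab, one_smul, hz, sub_self]
      have hinner : a * inner ℝ (gradient f z) (x - z) + b * inner ℝ (gradient f z) (y - z) = 0 := by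
        have := inner_add_right (𝕜 := ℝ) (gradient f z) (a • (x - z)) (b • (y - z))
        rw [key] at this
        simp only [inner_zero_right, real_inner_smul_right] at this
        linarith
      simp only [smul_eq_mul]
      have hzz : a * f z + b * f z = f z := by rw [← add_mul, hab, one_mul]
      nlinarith [add_le_add (mul_le_mul_of_nonneg_left h1 ha) (mul_le_mul_of_nonneg_left h2 hb),
        hzz, hinner]
    rw [← continuousOn_univ]
    exact hconv.continuousOn isOpen_univ
  have hg_cont : Continuous fun x : EuclideanSpace ℝ (Fin d) => rexp (-f x) :=
    Real.continuous_exp.comp hcont.neg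
  have hg_nonneg : ∀ x : EuclideanSpace ℝ (Fin d), 0 ≤ rexp (-f x) := fun x => (exp_pos _).le
  have hint : Integrable (fun x : EuclideanSpace ℝ (Fin d) => rexp (-f x)) := by
    by_contra hni
    rw [integral_undef hni] at hZ
    exact absurd hZ (ne_of_gt hZpos)
  have hGl : ∫⁻ x, ENNReal.ofReal (rexp (-f x)) = ENNReal.ofReal Z := by
    rw [hZ, ← ofReal_integral_eq_lintegral_ofReal hint (Eventually.of_forall hg_nonneg)]
  -- gradient vanishes at the mode
  have hgrad0 : gradient f xstar = 0 := by
    by_cases hd : DifferentiableAt ℝ f xstar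
    · have hmin : IsLocalMin f xstar := Eventually.of_forall hmode
      rw [gradient, hmin.fderiv_eq_zero, map_zero]
    · exact gradient_eq_zero_of_not_differentiableAt hd
  -- the radial derivative D
  set D : EuclideanSpace ℝ (Fin d) → ℝ := fun x => fderiv ℝ f x (x - xstar) with hD
  have hDmeas : Measurable D := by
    have h1 : Measurable fun x : EuclideanSpace ℝ (Fin d) => (fderiv ℝ f x, x - xstar) :=
      (measurable_fderiv ℝ f).prodMk (measurable_id.sub measurable_const)
    exact isBoundedBilinearMap_apply.continuous.measurable.comp h1
  have hDeq : ∀ x, (inner ℝ (gradient f x) (x - xstar) : ℝ) = D x := fun x => hgradf x _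
  have hDlb : ∀ x, α * ‖x - xstar‖^2 ≤ D x := by
    intro x
    have h1 := hstrong xstar x
    rw [hgrad0] at h1
    simp only [inner_zero_left] at h1
    have h2 := hstrong x xstar
    have e1 : (inner ℝ (gradient f x) (xstar - x) : ℝ) = -D x := by
      rw [← hDeq x, ← inner_neg_right]
      congr 1
      abel
    rw [e1, norm_sub_rev] at h2
    linarith
  have hDnn : ∀ x, 0 ≤ D x := fun x => le_trans (by positivity) (hDlb x)
  -- measurability of the integrand families
  have hmeasA : ∀ s : ℝ, Measurable fun x => ENNReal.ofReal (rexp (-f x) * (1 - rexp (-(s * D x)))) := by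
    intro s
    apply Measurable.ennreal_ofReal
    exact (hg_cont.measurable).mul
      (measurable_const.sub (((hDmeas.const_mul s).neg).exp))
  have hmeasB : ∀ s : ℝ, Measurable fun x => ENNReal.ofReal (rexp (-f x) * rexp (-(s * D x))) := by
    intro s
    apply Measurable.ennreal_ofReal
    exact (hg_cont.measurable).mul (((hDmeas.const_mul s).neg).exp)
  -- key bound for each s > 0
  have KB : ∀ s : ℝ, 0 < s →
      ∫⁻ x, ENNReal.ofReal (rexp (-f x) * ((1 - rexp (-(s * D x))) / s))
        ≤ ENNReal.ofReal (d * Z) := by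
    intro s hs
    have ht : (0:ℝ) < 1 + s := by linarith
    -- pointwise comparison after scaling
    have hpt : ∀ x, rexp (-f (xstar + (1+s) • (x - xstar))) ≤ rexp (-f x) * rexp (-(s * D x)) := by
      intro x
      have h := hstrong x (xstar + (1+s) • (x - xstar))
      have e : xstar + (1+s) • (x - xstar) - x = s • (x - xstar) := by module
      rw [e] at h
      have e2 : (inner ℝ (gradient f x) (s • (x - xstar)) : ℝ) = s * D x := by
        rw [real_inner_smul_right, hDeq]
      rw [e2] at h
      rw [← Real.exp_add]
      apply exp_le_exp.mpr
      have hnn : 0 ≤ α/2 * ‖s • (x - xstar)‖^2 := by positivity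
      linarith
    -- lower bound on B
    have hBle : ENNReal.ofReal ((((1+s))^d)⁻¹ * Z)
        ≤ ∫⁻ x, ENNReal.ofReal (rexp (-f x) * rexp (-(s * D x))) := by
      have hm : Measurable fun x => ENNReal.ofReal (rexp (-f x)) :=
        hg_cont.measurable.ennreal_ofReal
      calc ENNReal.ofReal ((((1+s))^d)⁻¹ * Z)
          = ENNReal.ofReal ((((1+s))^d)⁻¹) * ENNReal.ofReal Z :=
            ENNReal.ofReal_mul (by positivity)
        _ = ∫⁻ x, ENNReal.ofReal (rexp (-f (xstar + (1+s) • (x - xstar)))) := by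
            rw [← hGl, ← sm_lintegral_comp_affine d _ hm xstar (1+s) ht]
        _ ≤ _ := lintegral_mono fun x => ENNReal.ofReal_le_ofReal (hpt x)
    -- splitting
    have hsplit : (∫⁻ x, ENNReal.ofReal (rexp (-f x) * (1 - rexp (-(s * D x)))))
        + (∫⁻ x, ENNReal.ofReal (rexp (-f x) * rexp (-(s * D x)))) = ENNReal.ofReal Z := by
      rw [← lintegral_add_left (hmeasA s), ← hGl]
      congr 1
      funext x
      have hle1 : rexp (-(s * D x)) ≤ 1 := by
        apply exp_le_one_iff.mpr
        nlinarith [hDnn x]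
      rw [← ENNReal.ofReal_add (by nlinarith [hg_nonneg x]) (by positivity)]
      congr 1
      ring
    have hBfin : (∫⁻ x, ENNReal.ofReal (rexp (-f x) * rexp (-(s * D x)))) ≠ ⊤ := by
      intro hcon
      rw [hcon, add_top] at hsplit
      exact ENNReal.ofReal_ne_top hsplit.symm
    have hA : (∫⁻ x, ENNReal.ofReal (rexp (-f x) * (1 - rexp (-(s * D x)))))
        ≤ ENNReal.ofReal (s * d * Z) := by
      have hAeq := ENNReal.eq_sub_of_add_eq hBfin hsplit
      rw [hAeq]
      calc ENNReal.ofReal Z - (∫⁻ x, ENNReal.ofReal (rexp (-f x) * rexp (-(s * D x))))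
          ≤ ENNReal.ofReal Z - ENNReal.ofReal ((((1+s))^d)⁻¹ * Z) := tsub_le_tsub_left hBle _
        _ = ENNReal.ofReal (Z - (((1+s))^d)⁻¹ * Z) := by
            rw [ENNReal.ofReal_sub _ (by positivity)]
        _ ≤ ENNReal.ofReal (s * d * Z) := by
            apply ENNReal.ofReal_le_ofReal
            nlinarith [sm_bern d s hs, hZpos.le]
    -- divide by s
    calc ∫⁻ x, ENNReal.ofReal (rexp (-f x) * ((1 - rexp (-(s * D x))) / s))
        = ∫⁻ x, ENNReal.ofReal s⁻¹ * ENNReal.ofReal (rexp (-f x) * (1 - rexp (-(s * D x)))) := by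
          congr 1
          funext x
          rw [← ENNReal.ofReal_mul (by positivity)]
          congr 1
          field_simp
          try ring
      _ = ENNReal.ofReal s⁻¹ * ∫⁻ x, ENNReal.ofReal (rexp (-f x) * (1 - rexp (-(s * D x)))) :=
          lintegral_const_mul' _ _ ENNReal.ofReal_ne_top
      _ ≤ ENNReal.ofReal s⁻¹ * ENNReal.ofReal (s * d * Z) := by
          exact mul_le_mul_right hA _
      _ = ENNReal.ofReal (s⁻¹ * (s * d * Z)) := (ENNReal.ofReal_mul (by positivity)).symm
      _ = ENNReal.ofReal (d * Z) := by
          congr 1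
          field_simp
  -- Fatou
  have fatou : ∫⁻ x, ENNReal.ofReal (rexp (-f x) * D x) ≤ ENNReal.ofReal (d * Z) := by
    set u : ℕ → EuclideanSpace ℝ (Fin d) → ENNReal := fun n x =>
      ENNReal.ofReal (rexp (-f x) * ((1 - rexp (-((1/((n:ℝ)+1)) * D x))) / (1/((n:ℝ)+1)))) with hu
    have humeas : ∀ n, Measurable (u n) := by
      intro n
      apply Measurable.ennreal_ofReal
      exact (hg_cont.measurable).mul
        ((measurable_const.sub (((hDmeas.const_mul _).neg).exp)).div_const _)
    have hupt : ∀ x, Tendsto (fun n => u n x) atTop (𝓝 (ENNReal.ofReal (rexp (-f x) * D x))) := by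
      intro x
      exact (ENNReal.continuous_ofReal.tendsto _).comp ((sm_tend (D x)).const_mul (rexp (-f x)))
    calc ∫⁻ x, ENNReal.ofReal (rexp (-f x) * D x)
        = ∫⁻ x, liminf (fun n => u n x) atTop := by
          congr 1
          funext x
          rw [(hupt x).liminf_eq]
      _ ≤ liminf (fun n => ∫⁻ x, u n x) atTop := lintegral_liminf_le humeas
      _ ≤ liminf (fun _ : ℕ => ENNReal.ofReal (d * Z)) atTop := by
          apply liminf_le_liminf (Eventually.of_forall fun n => KB _ (by positivity))
          all_goals isBoundedDefault
      _ = ENNReal.ofReal (d * Z) := liminf_const _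
  -- insert the strong convexity lower bound
  have halpha : ENNReal.ofReal α * ∫⁻ x, ENNReal.ofReal (‖x - xstar‖^2 * rexp (-f x))
      ≤ ENNReal.ofReal (d * Z) := by
    rw [← lintegral_const_mul' _ _ ENNReal.ofReal_ne_top]
    refine le_trans (lintegral_mono fun x => ?_) fatou
    rw [← ENNReal.ofReal_mul hα.le]
    apply ENNReal.ofReal_le_ofReal
    nlinarith [hDlb x, hg_nonneg x, sq_nonneg ‖x - xstar‖]
  have hMl : ∫⁻ x, ENNReal.ofReal (‖x - xstar‖^2 * rexp (-f x)) ≤ ENNReal.ofReal (d * Z / α) := by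
    rw [ENNReal.ofReal_div_of_pos hα, ENNReal.le_div_iff_mul_le
      (Or.inl (by simp [hα, ENNReal.ofReal_pos.mpr hα] : ENNReal.ofReal α ≠ 0))
      (Or.inl ENNReal.ofReal_ne_top)]
    rw [mul_comm]
    exact halpha
  -- convert to Bochner integral
  have hnn : ∀ x : EuclideanSpace ℝ (Fin d), 0 ≤ ‖x - xstar‖^2 * (rexp (-f x) / Z) := by
    intro x
    have := hZpos
    positivity
  have hsm2 : AEStronglyMeasurable
      (fun x : EuclideanSpace ℝ (Fin d) => ‖x - xstar‖^2 * (rexp (-f x) / Z)) volume := by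
    apply Continuous.aestronglyMeasurable
    exact ((continuous_id.sub continuous_const).norm.pow 2).mul (hg_cont.div_const Z)
  rw [integral_eq_lintegral_of_nonneg_ae (Eventually.of_forall hnn) hsm2]
  have hfinal : ∫⁻ x, ENNReal.ofReal (‖x - xstar‖^2 * (rexp (-f x) / Z))
      ≤ ENNReal.ofReal ((d:ℝ) / α) := by
    calc ∫⁻ x, ENNReal.ofReal (‖x - xstar‖^2 * (rexp (-f x) / Z))
        = ∫⁻ x, ENNReal.ofReal Z⁻¹ * ENNReal.ofReal (‖x - xstar‖^2 * rexp (-f x)) := by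
          congr 1
          funext x
          rw [← ENNReal.ofReal_mul (by positivity)]
          congr 1
          field_simp
          try ring
      _ = ENNReal.ofReal Z⁻¹ * ∫⁻ x, ENNReal.ofReal (‖x - xstar‖^2 * rexp (-f x)) :=
          lintegral_const_mul' _ _ ENNReal.ofReal_ne_top
      _ ≤ ENNReal.ofReal Z⁻¹ * ENNReal.ofReal (d * Z / α) := mul_le_mul_right hMl _
      _ = ENNReal.ofReal (Z⁻¹ * (d * Z / α)) := (ENNReal.ofReal_mul (by positivity)).symm
      _ = ENNReal.ofReal ((d:ℝ) / α) := by
          congr 1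
          field_simp
          try ring
  exact ENNReal.toReal_le_of_le_ofReal (by positivity) hfinal
end

section
/- Let X₁, ..., X_n be {0,1}-valued random variables distributed uniformly over all binary vectors with exactly k ones (i.e., Bernoullis conditioned on ∑ᵢ Xᵢ = k), and let f(x) = ∑ᵢ αᵢ xᵢ with all αᵢ ≥ 0. Then for all t > 0, P[|f(X) - E[f(X)]| ≥ t] ≤ 2·exp(-t² / (16·∑_{i=1}^k (α↓ᵢ)²)), where α↓ is the non-increasing rearrangement of (α₁,...,α_n). -/
open Finset Real

set_option maxHeartbeats 1000000
section CBLCAux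

lemma CBLC_exp_core {w : ℝ} (hw : 0 ≤ w) : Real.exp w - 1 ≤ w / 2 * (Real.exp w + 1) := by
  have key : ∀ y : ℝ, HasDerivAt (fun v => v / 2 * (Real.exp v + 1) - (Real.exp v - 1))
      (1 / 2 * (Real.exp y + 1) + y / 2 * Real.exp y - Real.exp y) y := by
    intro y
    have h1 : HasDerivAt (fun v : ℝ => v / 2) (1/2) y := by
      simpa using (hasDerivAt_id y).div_const 2
    have h2 : HasDerivAt (fun v : ℝ => Real.exp v + 1) (Real.exp y) y := by
      simpa using (Real.hasDerivAt_exp y).add_const 1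
    have h3 := h1.mul h2
    have h4 : HasDerivAt (fun v : ℝ => Real.exp v - 1) (Real.exp y) y :=
      (Real.hasDerivAt_exp y).sub_const 1
    exact h3.sub h4
  have mono : MonotoneOn (fun v => v / 2 * (Real.exp v + 1) - (Real.exp v - 1)) (Set.Ici (0:ℝ)) := by
    apply monotoneOn_of_deriv_nonneg (convex_Ici 0)
    · exact ContinuousOn.sub (ContinuousOn.mul (by fun_prop) (by fun_prop)) (by fun_prop)
    · intro y _
      exact (key y).differentiableAt.differentiableWithinAt
    · intro y hy
      rw [interior_Ici] at hy
      rw [(key y).deriv]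
      have hee : Real.exp y - 1 ≤ y * Real.exp y := by
        have h := Real.add_one_le_exp (-y)
        have hp : 0 < Real.exp y := Real.exp_pos y
        have h2 : (-y + 1) * Real.exp y ≤ Real.exp (-y) * Real.exp y := by nlinarith
        rw [← Real.exp_add] at h2
        simp at h2
        nlinarith
      nlinarith [Real.exp_pos y]
  have := mono (Set.self_mem_Ici) (Set.mem_Ici.mpr hw) hw
  norm_num at this
  linarith

lemma CBLC_exp_core2 (v : ℝ) : v * (Real.exp v - 1) ≤ v ^ 2 / 2 * (Real.exp v + 1) := by
  rcases le_or_gt 0 v with hv | hv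
  · have := CBLC_exp_core hv
    nlinarith [Real.exp_pos v]
  · have hw : 0 ≤ -v := by linarith
    have h := CBLC_exp_core hw
    have hp : 0 < Real.exp v := Real.exp_pos v
    have hme : Real.exp (-v) * Real.exp v = 1 := by
      rw [← Real.exp_add]; simp
    have h2 : 1 - Real.exp v ≤ -v / 2 * (1 + Real.exp v) := by
      nlinarith [mul_le_mul_of_nonneg_right h hp.le]
    nlinarith [mul_le_mul_of_nonneg_right h2 hw]

lemma CBLC_exp_pair {lam : ℝ} (hlam : 0 ≤ lam) (a b : ℝ) :
    (a - b) * (Real.exp (lam * a) - Real.exp (lam * b)) ≤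
      lam / 2 * (a - b) ^ 2 * (Real.exp (lam * a) + Real.exp (lam * b)) := by
  rcases eq_or_lt_of_le hlam with h | h
  · simp [← h]
  · set u := a - b with hu
    have hb : Real.exp (lam * a) = Real.exp (lam * u) * Real.exp (lam * b) := by
      rw [← Real.exp_add, hu]; ring_nf
    have hcore := CBLC_exp_core2 (lam * u)
    have hpb : 0 < Real.exp (lam * b) := Real.exp_pos _
    rw [hb]
    have expand : u * (Real.exp (lam*u) * Real.exp (lam*b) - Real.exp (lam*b))
        = (u * (Real.exp (lam*u) - 1)) * Real.exp (lam*b) := by ring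
    have expand2 : lam / 2 * u ^ 2 * (Real.exp (lam*u) * Real.exp (lam*b) + Real.exp (lam*b))
        = (lam * u) ^2 / 2 * (Real.exp (lam*u) + 1) * Real.exp (lam*b) / lam := by
      field_simp
    rw [expand, expand2, le_div_iff₀ h]
    nlinarith [mul_le_mul_of_nonneg_right hcore hpb.le]

lemma CBLC_card_filter_lt (n k : ℕ) (hk : k ≤ n) :
    ((Finset.univ.filter (fun i : Fin n => (i : ℕ) < k)).card) = k := by
  rw [Finset.card_filter]
  rw [Fin.sum_univ_eq_sum_range (fun r => if r < k then 1 else 0)]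
  rw [← Finset.card_filter]
  rw [Finset.range_eq_Ico, Finset.Ico_filter_lt]
  simp [Nat.min_eq_right hk]

lemma CBLC_strictMono_le {k n : ℕ} (m : Fin k → Fin n) (hm : StrictMono m) :
    ∀ r (hr : r < k), r ≤ ((m ⟨r, hr⟩ : Fin n) : ℕ) := by
  intro r
  induction r with
  | zero => intro _; exact Nat.zero_le _
  | succ p ih =>
    intro hr
    have hp : p < k := Nat.lt_of_succ_lt hr
    have h1 := ih hp
    have h2 : m ⟨p, hp⟩ < m ⟨p + 1, hr⟩ := hm (by simp [Fin.lt_def])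
    rw [Fin.lt_def] at h2
    omega

lemma CBLC_topk_sum {n k : ℕ} (hk : k ≤ n) (g : Fin n → ℝ) (hg : Antitone g)
    (B : Finset (Fin n)) (hB : B.card = k) :
    ∑ i ∈ B, g i ≤ ∑ i ∈ Finset.univ.filter (fun i : Fin n => (i : ℕ) < k), g i := by
  classical
  set e := B.orderEmbOfFin hB with he
  have himg : (Finset.univ : Finset (Fin k)).image e = B := by
    ext i
    simp only [Finset.mem_image, Finset.mem_univ, true_and]
    constructor
    · rintro ⟨j, rfl⟩; exact Finset.orderEmbOfFin_mem B hB j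
    · intro hi
      have : i ∈ Set.range e := by rw [Finset.range_orderEmbOfFin]; exact hi
      obtain ⟨j, hj⟩ := this
      exact ⟨j, hj⟩
  have h1 : ∑ i ∈ B, g i = ∑ j : Fin k, g (e j) := by
    rw [← himg, Finset.sum_image (fun a _ b _ h => e.injective h)]
  rw [h1]
  have h2 : ∀ j : Fin k, g (e j) ≤ g ⟨(j : ℕ), lt_of_lt_of_le j.isLt hk⟩ := by
    intro j
    apply hg
    rw [Fin.le_def]
    exact CBLC_strictMono_le e e.strictMono j j.isLt
  calc ∑ j : Fin k, g (e j) ≤ ∑ j : Fin k, g ⟨(j : ℕ), lt_of_lt_of_le j.isLt hk⟩ :=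
        Finset.sum_le_sum (fun j _ => h2 j)
    _ = ∑ i ∈ Finset.univ.filter (fun i : Fin n => (i : ℕ) < k), g i := by
        refine Finset.sum_bij'
          (fun (j : Fin k) (_ : j ∈ Finset.univ) => (⟨(j : ℕ), lt_of_lt_of_le j.isLt hk⟩ : Fin n))
          (fun (i : Fin n) (hi : i ∈ Finset.univ.filter (fun i : Fin n => (i : ℕ) < k)) =>
            (⟨(i : ℕ), (Finset.mem_filter.mp hi).2⟩ : Fin k)) ?_ ?_ ?_ ?_ ?_
        · intro a ha; simp
        · intro a ha; exact Finset.mem_univ _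
        · intro a ha; exact Fin.ext rfl
        · intro a ha; exact Fin.ext rfl
        · intro a ha; rfl

lemma CBLC_all_le_topk {n k : ℕ} (hk : k ≤ n) (hk0 : 0 < k) (g : Fin n → ℝ)
    (hg : Antitone g) (hg0 : ∀ i, 0 ≤ g i) :
    (k : ℝ) * ∑ i, g i ≤ (n : ℝ) * ∑ i ∈ Finset.univ.filter (fun i : Fin n => (i : ℕ) < k), g i := by
  classical
  have hn0 : 0 < n := lt_of_lt_of_le hk0 hk
  set p := fun i : Fin n => (i : ℕ) < k with hp
  have hsplit := Finset.sum_filter_add_sum_filter_not Finset.univ p g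
  set km : Fin n := ⟨k - 1, by omega⟩ with hkm
  have hFcard : (Finset.univ.filter p).card = k := CBLC_card_filter_lt n k hk
  have hGcard : (Finset.univ.filter (fun i => ¬ p i)).card = n - k := by
    have := Finset.card_filter_add_card_filter_not (s := (Finset.univ : Finset (Fin n))) (p := p)
    simp only [Finset.card_univ, Fintype.card_fin] at this
    omega
  have hlow : (k : ℝ) * g km ≤ ∑ i ∈ Finset.univ.filter p, g i := by
    have := Finset.card_nsmul_le_sum (Finset.univ.filter p) g (g km)
      (fun i hi => by
        apply hg
        rw [Fin.le_def]
        simp only [hp, Finset.mem_filter] at hi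
        simp [hkm]
        omega)
    rw [hFcard] at this
    simpa [nsmul_eq_mul] using this
  have hhigh : ∑ i ∈ Finset.univ.filter (fun i => ¬ p i), g i ≤ ((n : ℝ) - k) * g km := by
    have := Finset.sum_le_card_nsmul (Finset.univ.filter (fun i => ¬ p i)) g (g km)
      (fun i hi => by
        apply hg
        rw [Fin.le_def]
        simp only [hp, Finset.mem_filter] at hi
        simp [hkm]
        omega)
    rw [hGcard] at this
    have hcast : ((n - k : ℕ) : ℝ) = (n : ℝ) - k := by
      push_cast [Nat.cast_sub hk]; ring
    simpa [nsmul_eq_mul, hcast] using this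
  have hgkm : 0 ≤ g km := hg0 km
  nlinarith [hsplit, hlow, hhigh, (Nat.cast_le (α := ℝ)).mpr hk]

section CBLC
variable {n k : ℕ}

def CBLC_A (x : Fin n → Bool) : Finset (Fin n) := Finset.univ.filter (fun i => x i)
def CBLC_Ac (x : Fin n → Bool) : Finset (Fin n) := Finset.univ.filter (fun i => x i = false)
def CBLC_S (n k : ℕ) : Finset (Fin n → Bool) :=
  Finset.univ.filter (fun x => (Finset.univ.filter (fun i => x i)).card = k)
def CBLC_sw (x : Fin n → Bool) (i j : Fin n) : Fin n → Bool :=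
  Function.update (Function.update x i false) j true
def CBLC_P (n k : ℕ) : Finset ((Fin n → Bool) × Fin n × Fin n) :=
  Finset.univ.filter (fun p => p.1 ∈ CBLC_S n k ∧ p.1 p.2.1 = true ∧ p.1 p.2.2 = false)
def CBLC_f (α : Fin n → ℝ) (x : Fin n → Bool) : ℝ := ∑ i ∈ CBLC_A x, α i

lemma CBLC_mem_S {x : Fin n → Bool} : x ∈ CBLC_S n k ↔ (CBLC_A x).card = k := by
  simp [CBLC_S, CBLC_A]

lemma CBLC_card_Ac {x : Fin n → Bool} (hx : x ∈ CBLC_S n k) : (CBLC_Ac x).card = n - k := by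
  have e1 : (Finset.univ.filter (fun i : Fin n => x i)) = Finset.univ.filter (fun i => x i = true) := by
    ext i; simp
  have e2 : (Finset.univ.filter (fun i : Fin n => x i = false))
      = Finset.univ.filter (fun i => ¬ x i = true) := by ext i; simp
  have h1 := Finset.card_filter_add_card_filter_not
    (s := (Finset.univ : Finset (Fin n))) (p := fun i => x i = true)
  simp only [Finset.card_univ, Fintype.card_fin] at h1
  have h2 := CBLC_mem_S.mp hx
  rw [CBLC_A, e1] at h2
  rw [CBLC_Ac, e2]
  omega

lemma CBLC_sum_Ac (α : Fin n → ℝ) {x : Fin n → Bool} :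
    ∑ j ∈ CBLC_Ac x, α j = (∑ i, α i) - CBLC_f α x := by
  have h := Finset.sum_filter_add_sum_filter_not Finset.univ (fun i => x i = true) α
  have he : (Finset.univ.filter (fun i : Fin n => ¬ x i = true))
      = (Finset.univ.filter (fun i => x i = false)) := by ext i; simp
  have he2 : (Finset.univ.filter (fun i : Fin n => x i = true))
      = (Finset.univ.filter (fun i => x i)) := by ext i; simp
  rw [he, he2] at h
  rw [CBLC_f, CBLC_A, CBLC_Ac]
  linarith

lemma CBLC_ne {x : Fin n → Bool} {i j : Fin n} (hi : x i = true) (hj : x j = false) : i ≠ j := by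
  rintro rfl; rw [hi] at hj; exact Bool.noConfusion hj

lemma CBLC_sw_j {x : Fin n → Bool} {i j : Fin n} (hi : x i = true) (hj : x j = false) :
    CBLC_sw x i j j = true := by rw [CBLC_sw]; simp

lemma CBLC_sw_i {x : Fin n → Bool} {i j : Fin n} (hi : x i = true) (hj : x j = false) :
    CBLC_sw x i j i = false := by
  rw [CBLC_sw, Function.update_of_ne (CBLC_ne hi hj), Function.update_self]

lemma CBLC_sw_other {x : Fin n → Bool} {i j : Fin n} {l : Fin n} (hl1 : l ≠ i) (hl2 : l ≠ j) :
    CBLC_sw x i j l = x l := by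
  rw [CBLC_sw, Function.update_of_ne hl2, Function.update_of_ne hl1]

lemma CBLC_A_sw {x : Fin n → Bool} {i j : Fin n} (hi : x i = true) (hj : x j = false) :
    CBLC_A (CBLC_sw x i j) = insert j ((CBLC_A x).erase i) := by
  ext l
  simp only [CBLC_A, Finset.mem_filter, Finset.mem_univ, true_and, Finset.mem_insert,
    Finset.mem_erase]
  by_cases h1 : l = j
  · subst h1; simp [CBLC_sw_j hi hj]
  · by_cases h2 : l = i
    · subst h2
      simp only [CBLC_sw_i hi hj, h1]
      simp [Ne.symm (CBLC_ne hi hj)]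
    · rw [CBLC_sw_other h2 h1]
      simp [h1, h2]

lemma CBLC_sw_mem {x : Fin n → Bool} {i j : Fin n} (hx : x ∈ CBLC_S n k)
    (hi : x i = true) (hj : x j = false) : CBLC_sw x i j ∈ CBLC_S n k := by
  have hiA : i ∈ CBLC_A x := by simp [CBLC_A, hi]
  have hjA : j ∉ (CBLC_A x).erase i := by simp [CBLC_A, hj]
  rw [CBLC_mem_S, CBLC_A_sw hi hj, Finset.card_insert_of_notMem hjA,
    Finset.card_erase_of_mem hiA]
  have hc := CBLC_mem_S.mp hx
  have hp : 0 < (CBLC_A x).card := Finset.card_pos.mpr ⟨i, hiA⟩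
  omega

lemma CBLC_sw_sw {x : Fin n → Bool} {i j : Fin n} (hi : x i = true) (hj : x j = false) :
    CBLC_sw (CBLC_sw x i j) j i = x := by
  have hij := CBLC_ne hi hj
  funext l
  simp only [CBLC_sw]
  rcases eq_or_ne l i with rfl | h1
  · rw [Function.update_self, hi]
  · rw [Function.update_of_ne h1]
    rcases eq_or_ne l j with rfl | h2
    · rw [Function.update_self, hj]
    · rw [Function.update_of_ne h2, Function.update_of_ne h2, Function.update_of_ne h1]

lemma CBLC_f_sw (α : Fin n → ℝ) {x : Fin n → Bool} {i j : Fin n}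
    (hi : x i = true) (hj : x j = false) :
    CBLC_f α (CBLC_sw x i j) = CBLC_f α x - α i + α j := by
  have hiA : i ∈ CBLC_A x := by simp [CBLC_A, hi]
  have hjA : j ∉ (CBLC_A x).erase i := by simp [CBLC_A, hj]
  rw [CBLC_f, CBLC_A_sw hi hj, Finset.sum_insert hjA, Finset.sum_erase_eq_sub hiA, CBLC_f]
  ring

end CBLC

section CBLC4
variable {n k : ℕ}

lemma CBLC_sum_P (F : (Fin n → Bool) → Fin n → Fin n → ℝ) :
    ∑ p ∈ CBLC_P n k, F p.1 p.2.1 p.2.2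
      = ∑ x ∈ CBLC_S n k, ∑ i ∈ CBLC_A x, ∑ j ∈ CBLC_Ac x, F x i j := by
  classical
  have step1 : ∑ p ∈ CBLC_P n k, F p.1 p.2.1 p.2.2
      = ∑ x : Fin n → Bool, ∑ i : Fin n, ∑ j : Fin n,
          if (x ∈ CBLC_S n k ∧ x i = true ∧ x j = false) then F x i j else 0 := by
    rw [CBLC_P, Finset.sum_filter]
    rw [Fintype.sum_prod_type]
    apply Finset.sum_congr rfl
    intro x _
    rw [Fintype.sum_prod_type]
  have step2 : ∀ x : Fin n → Bool, (∑ i : Fin n, ∑ j : Fin n,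
      if (x ∈ CBLC_S n k ∧ x i = true ∧ x j = false) then F x i j else 0)
      = if x ∈ CBLC_S n k then ∑ i ∈ CBLC_A x, ∑ j ∈ CBLC_Ac x, F x i j else 0 := by
    intro x
    by_cases hx : x ∈ CBLC_S n k
    · simp only [hx, true_and, if_true]
      rw [CBLC_A, Finset.sum_filter]
      apply Finset.sum_congr rfl
      intro i _
      rw [CBLC_Ac, Finset.sum_filter]
      by_cases hi : x i = true
      · simp only [hi, true_and, if_true]
      · simp [hi]
    · simp [hx]
  rw [step1]
  rw [Finset.sum_congr rfl (fun x _ => step2 x)]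
  rw [← Finset.sum_filter]
  congr 1
  ext x
  simp
end CBLC4

section CBLC5
variable {n k : ℕ}

lemma CBLC_mem_P {p : (Fin n → Bool) × Fin n × Fin n} :
    p ∈ CBLC_P n k ↔ p.1 ∈ CBLC_S n k ∧ p.1 p.2.1 = true ∧ p.1 p.2.2 = false := by
  rw [CBLC_P, Finset.mem_filter]
  exact ⟨fun h => h.2, fun h => ⟨Finset.mem_univ _, h⟩⟩







lemma CBLC_invol (H : (Fin n → Bool) → Fin n → Fin n → ℝ) :
    ∑ p ∈ CBLC_P n k, H p.1 p.2.1 p.2.2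
      = ∑ p ∈ CBLC_P n k, H (CBLC_sw p.1 p.2.1 p.2.2) p.2.2 p.2.1 := by
  refine Finset.sum_nbij'
    (fun (p : (Fin n → Bool) × Fin n × Fin n) => (CBLC_sw p.1 p.2.1 p.2.2, p.2.2, p.2.1))
    (fun (p : (Fin n → Bool) × Fin n × Fin n) => (CBLC_sw p.1 p.2.1 p.2.2, p.2.2, p.2.1))
    ?_ ?_ ?_ ?_ ?_
  · intro p hp
    obtain ⟨h1, h2, h3⟩ := CBLC_mem_P.mp hp
    exact CBLC_mem_P.mpr ⟨CBLC_sw_mem h1 h2 h3, CBLC_sw_j h2 h3, CBLC_sw_i h2 h3⟩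
  · intro p hp
    obtain ⟨h1, h2, h3⟩ := CBLC_mem_P.mp hp
    exact CBLC_mem_P.mpr ⟨CBLC_sw_mem h1 h2 h3, CBLC_sw_j h2 h3, CBLC_sw_i h2 h3⟩
  · intro p hp
    obtain ⟨h1, h2, h3⟩ := CBLC_mem_P.mp hp
    show (CBLC_sw (CBLC_sw p.1 p.2.1 p.2.2) p.2.2 p.2.1, p.2.1, p.2.2) = p
    rw [CBLC_sw_sw h2 h3]
  · intro p hp
    obtain ⟨h1, h2, h3⟩ := CBLC_mem_P.mp hp
    show (CBLC_sw (CBLC_sw p.1 p.2.1 p.2.2) p.2.2 p.2.1, p.2.1, p.2.2) = p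
    rw [CBLC_sw_sw h2 h3]
  · intro p hp
    obtain ⟨h1, h2, h3⟩ := CBLC_mem_P.mp hp
    show H p.1 p.2.1 p.2.2 = H (CBLC_sw (CBLC_sw p.1 p.2.1 p.2.2) p.2.2 p.2.1) p.2.1 p.2.2
    rw [CBLC_sw_sw h2 h3]

lemma CBLC_linsum (α : Fin n → ℝ) (hk : k ≤ n) {x : Fin n → Bool} (hx : x ∈ CBLC_S n k) :
    ∑ i ∈ CBLC_A x, ∑ j ∈ CBLC_Ac x, (α i - α j)
      = (n : ℝ) * CBLC_f α x - (k : ℝ) * (∑ i, α i) := by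
  have hcard : (CBLC_A x).card = k := by simpa [CBLC_S, CBLC_A] using hx
  have hcardc : (CBLC_Ac x).card = n - k := CBLC_card_Ac hx
  have hc : ((n - k : ℕ) : ℝ) = (n : ℝ) - k := by push_cast [Nat.cast_sub hk]; ring
  have inner : ∀ i : Fin n, ∑ j ∈ CBLC_Ac x, (α i - α j)
      = ((n : ℝ) - k) * α i - ((∑ i, α i) - CBLC_f α x) := by
    intro i
    rw [Finset.sum_sub_distrib, Finset.sum_const, CBLC_sum_Ac α, hcardc, nsmul_eq_mul, hc]
  calc ∑ i ∈ CBLC_A x, ∑ j ∈ CBLC_Ac x, (α i - α j)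
      = ∑ i ∈ CBLC_A x, (((n : ℝ) - k) * α i - ((∑ i, α i) - CBLC_f α x)) :=
        Finset.sum_congr rfl (fun i _ => inner i)
    _ = ((n : ℝ) - k) * (∑ i ∈ CBLC_A x, α i)
        - (CBLC_A x).card * ((∑ i, α i) - CBLC_f α x) := by
        rw [Finset.sum_sub_distrib, ← Finset.mul_sum, Finset.sum_const, nsmul_eq_mul]
    _ = (n : ℝ) * CBLC_f α x - (k : ℝ) * (∑ i, α i) := by
        rw [hcard, show (∑ i ∈ CBLC_A x, α i) = CBLC_f α x from rfl]; ring

lemma CBLC_quadsum (α : Fin n → ℝ) (hk : k ≤ n) {x : Fin n → Bool} (hx : x ∈ CBLC_S n k)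
    (V : ℝ)
    (hV1 : ∀ B : Finset (Fin n), B.card = k → ∑ i ∈ B, (α i)^2 ≤ V)
    (hV2 : (k : ℝ) * (∑ i, (α i)^2) ≤ (n : ℝ) * V) :
    ∑ i ∈ CBLC_A x, ∑ j ∈ CBLC_Ac x, (α i - α j)^2 ≤ 4 * n * V := by
  have hcard : (CBLC_A x).card = k := by simpa [CBLC_S, CBLC_A] using hx
  have hcardc : (CBLC_Ac x).card = n - k := CBLC_card_Ac hx
  have hc : ((n - k : ℕ) : ℝ) = (n : ℝ) - k := by push_cast [Nat.cast_sub hk]; ring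
  have hVnn : 0 ≤ V := le_trans (Finset.sum_nonneg (fun i _ => sq_nonneg (α i))) (hV1 _ hcard)
  have step1 : ∑ i ∈ CBLC_A x, ∑ j ∈ CBLC_Ac x, (α i - α j)^2
      ≤ ∑ i ∈ CBLC_A x, ∑ j ∈ CBLC_Ac x, (2 * (α i)^2 + 2 * (α j)^2) := by
    apply Finset.sum_le_sum; intro i _
    apply Finset.sum_le_sum; intro j _
    nlinarith [sq_nonneg (α i + α j)]
  have inner2 : ∀ i : Fin n, ∑ j ∈ CBLC_Ac x, (2 * (α i)^2 + 2 * (α j)^2)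
      = ((n : ℝ) - k) * (2 * (α i)^2) + 2 * (∑ j ∈ CBLC_Ac x, (α j)^2) := by
    intro i
    rw [Finset.sum_add_distrib, Finset.sum_const, hcardc, nsmul_eq_mul, hc, ← Finset.mul_sum]
  have step2 : ∑ i ∈ CBLC_A x, ∑ j ∈ CBLC_Ac x, (2 * (α i)^2 + 2 * (α j)^2)
      = 2 * ((n : ℝ) - k) * (∑ i ∈ CBLC_A x, (α i)^2)
        + 2 * (k : ℝ) * (∑ j ∈ CBLC_Ac x, (α j)^2) := by
    calc ∑ i ∈ CBLC_A x, ∑ j ∈ CBLC_Ac x, (2 * (α i)^2 + 2 * (α j)^2)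
        = ∑ i ∈ CBLC_A x, (((n : ℝ) - k) * (2 * (α i)^2) + 2 * (∑ j ∈ CBLC_Ac x, (α j)^2)) :=
          Finset.sum_congr rfl (fun i _ => inner2 i)
      _ = ((n : ℝ) - k) * (2 * ∑ i ∈ CBLC_A x, (α i)^2)
          + (CBLC_A x).card * (2 * (∑ j ∈ CBLC_Ac x, (α j)^2)) := by
          rw [Finset.sum_add_distrib, Finset.sum_const, nsmul_eq_mul]
          congr 1
          rw [← Finset.mul_sum, ← Finset.mul_sum]
      _ = 2 * ((n : ℝ) - k) * (∑ i ∈ CBLC_A x, (α i)^2)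
          + 2 * (k : ℝ) * (∑ j ∈ CBLC_Ac x, (α j)^2) := by rw [hcard]; ring
  have hA : ∑ i ∈ CBLC_A x, (α i)^2 ≤ V := hV1 _ hcard
  have hAc : ∑ j ∈ CBLC_Ac x, (α j)^2 ≤ ∑ j, (α j)^2 :=
    Finset.sum_le_sum_of_subset_of_nonneg (Finset.subset_univ _)
      (fun j _ _ => sq_nonneg (α j))
  have hkn : (k : ℝ) ≤ (n : ℝ) := Nat.cast_le.mpr hk
  have hsumnn : 0 ≤ ∑ i ∈ CBLC_A x, (α i)^2 := Finset.sum_nonneg (fun i _ => sq_nonneg _)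
  have h2 : 2 * (k:ℝ) * (∑ j ∈ CBLC_Ac x, (α j)^2) ≤ 2 * ((n:ℝ) * V) := by
    have hh : (k:ℝ) * (∑ j ∈ CBLC_Ac x, (α j)^2) ≤ (k:ℝ) * (∑ j, (α j)^2) :=
      mul_le_mul_of_nonneg_left hAc (Nat.cast_nonneg k)
    linarith [hV2]
  have h1 : 2 * ((n:ℝ) - k) * (∑ i ∈ CBLC_A x, (α i)^2) ≤ 2 * ((n:ℝ) * V) := by
    have hnk : 0 ≤ (n:ℝ) - k := by linarith
    nlinarith [Nat.cast_nonneg (α := ℝ) k]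
  calc ∑ i ∈ CBLC_A x, ∑ j ∈ CBLC_Ac x, (α i - α j)^2
      ≤ 2 * ((n : ℝ) - k) * (∑ i ∈ CBLC_A x, (α i)^2)
        + 2 * (k : ℝ) * (∑ j ∈ CBLC_Ac x, (α j)^2) := by rw [← step2]; exact step1
    _ ≤ 2 * ((n:ℝ) * V) + 2 * ((n:ℝ) * V) := add_le_add h1 h2
    _ = 4 * n * V := by ring

end CBLC5

lemma CBLC_hasDerivAt_M {γ : Type*} (S : Finset γ) (g : γ → ℝ) (lam : ℝ) :
    HasDerivAt (fun l => ∑ x ∈ S, Real.exp (l * g x))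
      (∑ x ∈ S, g x * Real.exp (lam * g x)) lam := by
  apply HasDerivAt.fun_sum
  intro x _
  have h1 : HasDerivAt (fun l : ℝ => l * g x) (g x) lam := by
    simpa using (hasDerivAt_id lam).mul_const (g x)
  have := h1.exp
  simpa [mul_comm] using this

lemma CBLC_mgf_bound {γ : Type*} (S : Finset γ) (g : γ → ℝ) (V : ℝ) (hS : S.Nonempty)
    (key : ∀ lam : ℝ, 0 ≤ lam →
      ∑ x ∈ S, g x * Real.exp (lam * g x) ≤ 2 * V * lam * ∑ x ∈ S, Real.exp (lam * g x))
    (key2 : ∀ lam : ℝ, lam ≤ 0 →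
      2 * V * lam * ∑ x ∈ S, Real.exp (lam * g x) ≤ ∑ x ∈ S, g x * Real.exp (lam * g x)) :
    ∀ lam : ℝ, ∑ x ∈ S, Real.exp (lam * g x) ≤ S.card * Real.exp (V * lam ^ 2) := by
  set M : ℝ → ℝ := fun l => ∑ x ∈ S, Real.exp (l * g x) with hM
  have hMpos : ∀ l, 0 < M l := fun l =>
    Finset.sum_pos (fun x _ => Real.exp_pos _) hS
  have hMd : ∀ l, HasDerivAt M (∑ x ∈ S, g x * Real.exp (l * g x)) l :=
    fun l => CBLC_hasDerivAt_M S g l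
  set G : ℝ → ℝ := fun l => Real.log (M l) - V * l ^ 2 with hG
  have hGd : ∀ l, HasDerivAt G ((∑ x ∈ S, g x * Real.exp (l * g x)) / M l - V * (2 * l)) l := by
    intro l
    have h1 := (hMd l).log (ne_of_gt (hMpos l))
    have h2 : HasDerivAt (fun l : ℝ => V * l ^ 2) (V * (2 * l)) l := by
      have := (hasDerivAt_pow 2 l).const_mul V
      simpa using this
    exact h1.sub h2
  have hG0 : G 0 = Real.log (S.card) := by
    simp [hG, hM]
  have main : ∀ lam : ℝ, G lam ≤ Real.log (S.card) := by
    intro lam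
    rcases le_or_gt 0 lam with hlam | hlam
    · have hanti : AntitoneOn G (Set.Icc 0 lam) := by
        apply antitoneOn_of_deriv_nonpos (convex_Icc 0 lam)
        · intro y _; exact (hGd y).continuousAt.continuousWithinAt
        · intro y _; exact (hGd y).differentiableAt.differentiableWithinAt
        · intro y hy
          rw [interior_Icc] at hy
          rw [(hGd y).deriv]
          have h := key y (le_of_lt hy.1)
          have hMy := hMpos y
          rw [sub_nonpos, div_le_iff₀ hMy]
          calc (∑ x ∈ S, g x * Real.exp (y * g x)) ≤ 2 * V * y * M y := h
            _ = V * (2 * y) * M y := by ring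
      rcases eq_or_lt_of_le hlam with rfl | h0
      · rw [hG0]
      · have := hanti (Set.left_mem_Icc.mpr hlam) (Set.right_mem_Icc.mpr hlam) hlam
        rw [hG0] at this
        exact this
    · have hmono : MonotoneOn G (Set.Icc lam 0) := by
        apply monotoneOn_of_deriv_nonneg (convex_Icc lam 0)
        · intro y _; exact (hGd y).continuousAt.continuousWithinAt
        · intro y _; exact (hGd y).differentiableAt.differentiableWithinAt
        · intro y hy
          rw [interior_Icc] at hy
          rw [(hGd y).deriv]
          have hy0 : y ≤ 0 := le_of_lt hy.2
          have h := key2 y hy0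
          have hMy := hMpos y
          rw [sub_nonneg, le_div_iff₀ hMy]
          calc V * (2 * y) * M y = 2 * V * y * M y := by ring
            _ ≤ ∑ x ∈ S, g x * Real.exp (y * g x) := h
      have := hmono (Set.left_mem_Icc.mpr (le_of_lt hlam)) (Set.right_mem_Icc.mpr (le_of_lt hlam))
        (le_of_lt hlam)
      rw [hG0] at this
      exact this
  intro lam
  have h1 := main lam
  have h2 : Real.log (M lam) ≤ Real.log (S.card) + V * lam ^ 2 := by
    have := h1
    simp only [hG] at this
    linarith
  have h3 : M lam ≤ Real.exp (Real.log (S.card) + V * lam ^ 2) := by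
    calc M lam = Real.exp (Real.log (M lam)) := (Real.exp_log (hMpos lam)).symm
      _ ≤ Real.exp (Real.log (S.card) + V * lam ^ 2) := Real.exp_le_exp.mpr h2
  have hcard : (0:ℝ) < S.card := by
    have := Finset.card_pos.mpr hS
    exact_mod_cast this
  rw [Real.exp_add, Real.exp_log hcard] at h3
  exact h3

lemma CBLC_chernoff {γ : Type*} [DecidableEq γ] (S : Finset γ) (g : γ → ℝ) (V t : ℝ)
    (hV : 0 < V) (ht : 0 < t)
    (hM : ∀ lam : ℝ, ∑ x ∈ S, Real.exp (lam * g x) ≤ S.card * Real.exp (V * lam ^ 2)) :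
    ((S.filter (fun x => t ≤ |g x|)).card : ℝ) ≤ 2 * S.card * Real.exp (-t^2/(4*V)) := by
  classical
  have hsplit : (S.filter (fun x => t ≤ |g x|)).card ≤
      (S.filter (fun x => t ≤ g x)).card + (S.filter (fun x => g x ≤ -t)).card := by
    have hsub : S.filter (fun x => t ≤ |g x|) ⊆
        (S.filter (fun x => t ≤ g x)) ∪ (S.filter (fun x => g x ≤ -t)) := by
      intro x hx
      rw [Finset.mem_filter] at hx
      rw [Finset.mem_union, Finset.mem_filter, Finset.mem_filter]
      rcases le_abs.mp hx.2 with h | h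
      · left; exact ⟨hx.1, h⟩
      · right; exact ⟨hx.1, by linarith⟩
    calc (S.filter (fun x => t ≤ |g x|)).card
        ≤ ((S.filter (fun x => t ≤ g x)) ∪ (S.filter (fun x => g x ≤ -t))).card :=
          Finset.card_le_card hsub
      _ ≤ _ := Finset.card_union_le _ _
  have hup : ((S.filter (fun x => t ≤ g x)).card : ℝ) ≤ S.card * Real.exp (-t^2/(4*V)) := by
    set lam := t / (2 * V) with hlam
    have hlampos : 0 < lam := div_pos ht (by linarith)
    have h1 : ((S.filter (fun x => t ≤ g x)).card : ℝ) * Real.exp (lam * t)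
        ≤ ∑ x ∈ S, Real.exp (lam * g x) := by
      calc ((S.filter (fun x => t ≤ g x)).card : ℝ) * Real.exp (lam * t)
          = ∑ _x ∈ S.filter (fun x => t ≤ g x), Real.exp (lam * t) := by
            rw [Finset.sum_const, nsmul_eq_mul]
        _ ≤ ∑ x ∈ S.filter (fun x => t ≤ g x), Real.exp (lam * g x) := by
            apply Finset.sum_le_sum
            intro x hx
            have := (Finset.mem_filter.mp hx).2
            exact Real.exp_le_exp.mpr (mul_le_mul_of_nonneg_left this (le_of_lt hlampos))
        _ ≤ ∑ x ∈ S, Real.exp (lam * g x) :=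
            Finset.sum_le_sum_of_subset_of_nonneg (Finset.filter_subset _ _)
              (fun x _ _ => le_of_lt (Real.exp_pos _))
    have h2 := hM lam
    have h3 : ((S.filter (fun x => t ≤ g x)).card : ℝ)
        ≤ S.card * Real.exp (V * lam ^ 2) / Real.exp (lam * t) := by
      rw [le_div_iff₀ (Real.exp_pos _)]
      linarith
    have h4 : Real.exp (V * lam ^ 2) / Real.exp (lam * t) = Real.exp (-t^2/(4*V)) := by
      rw [← Real.exp_sub]
      congr 1
      rw [hlam]
      field_simp
      ring
    calc ((S.filter (fun x => t ≤ g x)).card : ℝ)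
        ≤ S.card * Real.exp (V * lam ^ 2) / Real.exp (lam * t) := h3
      _ = S.card * (Real.exp (V * lam ^ 2) / Real.exp (lam * t)) := by ring
      _ = S.card * Real.exp (-t^2/(4*V)) := by rw [h4]
  have hdown : ((S.filter (fun x => g x ≤ -t)).card : ℝ) ≤ S.card * Real.exp (-t^2/(4*V)) := by
    set lam := -(t / (2 * V)) with hlam
    have hlamneg : lam < 0 := by
      have : 0 < t / (2*V) := div_pos ht (by linarith)
      simp [hlam]; linarith
    have h1 : ((S.filter (fun x => g x ≤ -t)).card : ℝ) * Real.exp (lam * (-t))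
        ≤ ∑ x ∈ S, Real.exp (lam * g x) := by
      calc ((S.filter (fun x => g x ≤ -t)).card : ℝ) * Real.exp (lam * (-t))
          = ∑ _x ∈ S.filter (fun x => g x ≤ -t), Real.exp (lam * (-t)) := by
            rw [Finset.sum_const, nsmul_eq_mul]
        _ ≤ ∑ x ∈ S.filter (fun x => g x ≤ -t), Real.exp (lam * g x) := by
            apply Finset.sum_le_sum
            intro x hx
            have hgx := (Finset.mem_filter.mp hx).2
            apply Real.exp_le_exp.mpr
            nlinarith
        _ ≤ ∑ x ∈ S, Real.exp (lam * g x) :=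
            Finset.sum_le_sum_of_subset_of_nonneg (Finset.filter_subset _ _)
              (fun x _ _ => le_of_lt (Real.exp_pos _))
    have h2 := hM lam
    have h3 : ((S.filter (fun x => g x ≤ -t)).card : ℝ)
        ≤ S.card * Real.exp (V * lam ^ 2) / Real.exp (lam * (-t)) := by
      rw [le_div_iff₀ (Real.exp_pos _)]
      linarith
    have h4 : Real.exp (V * lam ^ 2) / Real.exp (lam * (-t)) = Real.exp (-t^2/(4*V)) := by
      rw [← Real.exp_sub]
      congr 1
      rw [hlam]
      field_simp
      ring
    calc ((S.filter (fun x => g x ≤ -t)).card : ℝ)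
        ≤ S.card * Real.exp (V * lam ^ 2) / Real.exp (lam * (-t)) := h3
      _ = S.card * (Real.exp (V * lam ^ 2) / Real.exp (lam * (-t))) := by ring
      _ = S.card * Real.exp (-t^2/(4*V)) := by rw [h4]
  have : ((S.filter (fun x => t ≤ |g x|)).card : ℝ)
      ≤ ((S.filter (fun x => t ≤ g x)).card : ℝ) + ((S.filter (fun x => g x ≤ -t)).card : ℝ) := by
    exact_mod_cast hsplit
  linarith

end CBLCAux

section CBLCKey
variable {n k : ℕ}

lemma CBLC_exp_pair_neg {lam : ℝ} (hlam : lam ≤ 0) (a b : ℝ) :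
    lam / 2 * (a - b) ^ 2 * (Real.exp (lam * a) + Real.exp (lam * b)) ≤
      (a - b) * (Real.exp (lam * a) - Real.exp (lam * b)) := by
  have h := CBLC_exp_pair (lam := -lam) (by linarith) (-a) (-b)
  simp only [neg_mul_neg] at h
  nlinarith [h]

lemma CBLC_pull (α : Fin n → ℝ) (w : (Fin n → Bool) → ℝ) (G : Fin n → Fin n → ℝ)
    (x : Fin n → Bool) :
    ∑ i ∈ CBLC_A x, ∑ j ∈ CBLC_Ac x, (G i j * w x)
      = (∑ i ∈ CBLC_A x, ∑ j ∈ CBLC_Ac x, G i j) * w x := by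
  rw [Finset.sum_mul]
  exact Finset.sum_congr rfl (fun i _ => by rw [Finset.sum_mul])

lemma CBLC_key (α : Fin n → ℝ) (hk : k ≤ n) (hn : 0 < n) (E V : ℝ)
    (hE : (n : ℝ) * E = (k : ℝ) * (∑ i, α i))
    (hquad : ∀ x ∈ CBLC_S n k,
      ∑ i ∈ CBLC_A x, ∑ j ∈ CBLC_Ac x, (α i - α j)^2 ≤ 4 * n * V)
    (lam : ℝ) :
    (0 ≤ lam → ∑ x ∈ CBLC_S n k, (CBLC_f α x - E) * Real.exp (lam * (CBLC_f α x - E))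
      ≤ 2 * V * lam * ∑ x ∈ CBLC_S n k, Real.exp (lam * (CBLC_f α x - E))) ∧
    (lam ≤ 0 → 2 * V * lam * ∑ x ∈ CBLC_S n k, Real.exp (lam * (CBLC_f α x - E))
      ≤ ∑ x ∈ CBLC_S n k, (CBLC_f α x - E) * Real.exp (lam * (CBLC_f α x - E))) := by
  classical
  set w : (Fin n → Bool) → ℝ := fun x => Real.exp (lam * (CBLC_f α x - E)) with hw
  have hwpos : ∀ x, 0 < w x := fun x => Real.exp_pos _
  set M : ℝ := ∑ x ∈ CBLC_S n k, w x with hMdef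
  set B : ℝ := ∑ x ∈ CBLC_S n k, (CBLC_f α x - E) * w x with hBdef
  set A : ℝ := ∑ p ∈ CBLC_P n k, (α p.2.1 - α p.2.2) * w p.1 with hA
  have hnpos : (0:ℝ) < n := by exact_mod_cast hn
  have hstep_b : A = ∑ x ∈ CBLC_S n k, ((n:ℝ) * (CBLC_f α x - E)) * w x := by
    rw [hA, CBLC_sum_P (F := fun x i j => (α i - α j) * w x)]
    apply Finset.sum_congr rfl
    intro x hx
    rw [CBLC_pull α w (fun i j => α i - α j) x, CBLC_linsum α hk hx]
    have heq : (n:ℝ) * CBLC_f α x - (k:ℝ) * (∑ i, α i) = (n:ℝ) * (CBLC_f α x - E) := by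
      linear_combination hE
    rw [heq]
  have hAeq : A = (n:ℝ) * B := by
    rw [hstep_b, hBdef, Finset.mul_sum]
    exact Finset.sum_congr rfl (fun x _ => by ring)
  have hinv : A = ∑ p ∈ CBLC_P n k, (α p.2.2 - α p.2.1) * w (CBLC_sw p.1 p.2.1 p.2.2) := by
    rw [hA]; exact CBLC_invol (H := fun x i j => (α i - α j) * w x)
  have hdouble : 2 * A = ∑ p ∈ CBLC_P n k,
      (α p.2.1 - α p.2.2) * (w p.1 - w (CBLC_sw p.1 p.2.1 p.2.2)) := by
    have expand : ∑ p ∈ CBLC_P n k,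
        (α p.2.1 - α p.2.2) * (w p.1 - w (CBLC_sw p.1 p.2.1 p.2.2))
        = A - ∑ p ∈ CBLC_P n k, (α p.2.1 - α p.2.2) * w (CBLC_sw p.1 p.2.1 p.2.2) := by
      rw [hA, ← Finset.sum_sub_distrib]
      exact Finset.sum_congr rfl (fun p _ => by ring)
    have hneg : ∑ p ∈ CBLC_P n k, (α p.2.1 - α p.2.2) * w (CBLC_sw p.1 p.2.1 p.2.2) = -A := by
      rw [hinv, ← Finset.sum_neg_distrib]
      exact Finset.sum_congr rfl (fun p _ => by ring)
    rw [expand, hneg]; ring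
  have hquadW : ∑ p ∈ CBLC_P n k, (α p.2.1 - α p.2.2)^2 * w p.1 ≤ 4 * n * V * M := by
    rw [CBLC_sum_P (F := fun x i j => (α i - α j)^2 * w x)]
    calc ∑ x ∈ CBLC_S n k, ∑ i ∈ CBLC_A x, ∑ j ∈ CBLC_Ac x, ((α i - α j)^2 * w x)
        = ∑ x ∈ CBLC_S n k, (∑ i ∈ CBLC_A x, ∑ j ∈ CBLC_Ac x, (α i - α j)^2) * w x :=
          Finset.sum_congr rfl (fun x _ => CBLC_pull α w (fun i j => (α i - α j)^2) x)
      _ ≤ ∑ x ∈ CBLC_S n k, (4 * n * V) * w x :=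
          Finset.sum_le_sum (fun x hx =>
            mul_le_mul_of_nonneg_right (hquad x hx) (hwpos x).le)
      _ = 4 * n * V * M := by rw [hMdef, Finset.mul_sum]
  have hsym2 : ∑ p ∈ CBLC_P n k, (α p.2.1 - α p.2.2)^2 * w (CBLC_sw p.1 p.2.1 p.2.2)
      = ∑ p ∈ CBLC_P n k, (α p.2.1 - α p.2.2)^2 * w p.1 := by
    have h1 := CBLC_invol (n := n) (k := k)
      (H := fun x i j => (α i - α j)^2 * w (CBLC_sw x i j))
    rw [h1]
    apply Finset.sum_congr rfl
    intro p hp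
    obtain ⟨hm1, hm2, hm3⟩ := CBLC_mem_P.mp hp
    rw [CBLC_sw_sw hm2 hm3]
    ring
  have hsplit2 : ∑ p ∈ CBLC_P n k,
      (lam / 2 * (α p.2.1 - α p.2.2)^2 * (w p.1 + w (CBLC_sw p.1 p.2.1 p.2.2)))
      = lam * ∑ p ∈ CBLC_P n k, (α p.2.1 - α p.2.2)^2 * w p.1 := by
    have hterm : ∀ p ∈ CBLC_P n k,
        lam / 2 * (α p.2.1 - α p.2.2)^2 * (w p.1 + w (CBLC_sw p.1 p.2.1 p.2.2))
        = lam / 2 * ((α p.2.1 - α p.2.2)^2 * w p.1)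
          + lam / 2 * ((α p.2.1 - α p.2.2)^2 * w (CBLC_sw p.1 p.2.1 p.2.2)) :=
      fun p _ => by ring
    rw [Finset.sum_congr rfl hterm, Finset.sum_add_distrib, ← Finset.mul_sum, ← Finset.mul_sum,
      hsym2]
    ring
  have hdiff : ∀ p ∈ CBLC_P n k,
      (CBLC_f α p.1 - E) - (CBLC_f α (CBLC_sw p.1 p.2.1 p.2.2) - E)
        = α p.2.1 - α p.2.2 := by
    intro p hp
    obtain ⟨hm1, hm2, hm3⟩ := CBLC_mem_P.mp hp
    rw [CBLC_f_sw α hm2 hm3]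
    ring
  constructor
  · intro hlam
    have hpoint : ∀ p ∈ CBLC_P n k,
        (α p.2.1 - α p.2.2) * (w p.1 - w (CBLC_sw p.1 p.2.1 p.2.2))
          ≤ lam / 2 * (α p.2.1 - α p.2.2)^2 * (w p.1 + w (CBLC_sw p.1 p.2.1 p.2.2)) := by
      intro p hp
      have h := CBLC_exp_pair hlam (CBLC_f α p.1 - E) (CBLC_f α (CBLC_sw p.1 p.2.1 p.2.2) - E)
      rw [hdiff p hp] at h
      exact h
    have hs1 : 2 * A ≤ lam * ∑ p ∈ CBLC_P n k, (α p.2.1 - α p.2.2)^2 * w p.1 := by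
      rw [hdouble, ← hsplit2]
      exact Finset.sum_le_sum hpoint
    have hs2 : lam * (∑ p ∈ CBLC_P n k, (α p.2.1 - α p.2.2)^2 * w p.1)
        ≤ lam * (4 * n * V * M) := mul_le_mul_of_nonneg_left hquadW hlam
    have hcomb : 2 * ((n:ℝ) * B) ≤ lam * (4 * n * V * M) := by
      rw [← hAeq]; linarith
    have hgoal : B * (n:ℝ) ≤ (2 * V * lam * M) * (n:ℝ) := by nlinarith [hcomb]
    exact le_of_mul_le_mul_right hgoal hnpos
  · intro hlam
    have hpoint : ∀ p ∈ CBLC_P n k,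
        lam / 2 * (α p.2.1 - α p.2.2)^2 * (w p.1 + w (CBLC_sw p.1 p.2.1 p.2.2))
          ≤ (α p.2.1 - α p.2.2) * (w p.1 - w (CBLC_sw p.1 p.2.1 p.2.2)) := by
      intro p hp
      have h := CBLC_exp_pair_neg hlam (CBLC_f α p.1 - E)
        (CBLC_f α (CBLC_sw p.1 p.2.1 p.2.2) - E)
      rw [hdiff p hp] at h
      exact h
    have hs1 : lam * ∑ p ∈ CBLC_P n k, (α p.2.1 - α p.2.2)^2 * w p.1 ≤ 2 * A := by
      rw [hdouble, ← hsplit2]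
      exact Finset.sum_le_sum hpoint
    have hs2 : lam * (4 * n * V * M)
        ≤ lam * (∑ p ∈ CBLC_P n k, (α p.2.1 - α p.2.2)^2 * w p.1) :=
      mul_le_mul_of_nonpos_left hquadW hlam
    have hcomb : lam * (4 * n * V * M) ≤ 2 * ((n:ℝ) * B) := by
      rw [← hAeq]; linarith
    have hgoal : (2 * V * lam * M) * (n:ℝ) ≤ B * (n:ℝ) := by nlinarith [hcomb]
    exact le_of_mul_le_mul_right hgoal hnpos

end CBLCKey

/-- Concentration of a nonnegative linear function of Bernoullis conditioned on
their sum being `k` (uniform over binary vectors with exactly `k` ones):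
`P[|f(X) - E f(X)| ≥ t] ≤ 2 exp (-t² / (16 ∑_{i<k} (α↓ᵢ)²))`,
where `α↓` is the non-increasing rearrangement of `α`. -/
theorem conditioned_bernoulli_linear_concentration
    (n k : ℕ) (hk : k ≤ n) (α : Fin n → ℝ) (hα : ∀ i, 0 ≤ α i)
    (S : Finset (Fin n → Bool))
    (hS : S = Finset.univ.filter (fun x => (Finset.univ.filter (fun i => x i)).card = k))
    (f : (Fin n → Bool) → ℝ)
    (hf : f = fun x => ∑ i, α i * (if x i then (1:ℝ) else 0))
    (E : ℝ) (hE : E = (∑ x ∈ S, f x) / S.card)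
    (αdown : Fin n → ℝ) (σ : Equiv.Perm (Fin n))
    (hperm : αdown = α ∘ σ) (hanti : Antitone αdown)
    (t : ℝ) (ht : 0 < t) :
    ((S.filter (fun x => t ≤ |f x - E|)).card : ℝ) / S.card ≤
      2 * Real.exp (-t ^ 2 / (16 * ∑ i ∈ Finset.univ.filter (fun i : Fin n => (i : ℕ) < k),
        (αdown i) ^ 2)) := by
  classical
  have hSdef : S = CBLC_S n k := hS
  have hfdef : ∀ x, f x = CBLC_f α x := by
    intro x
    rw [hf, CBLC_f, CBLC_A, Finset.sum_filter]
    apply Finset.sum_congr rfl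
    intro i _
    by_cases h : x i <;> simp [h]
  set V := ∑ i ∈ Finset.univ.filter (fun i : Fin n => (i : ℕ) < k), (αdown i) ^ 2 with hV
  have hVnonneg : (0:ℝ) ≤ V := Finset.sum_nonneg (fun i _ => sq_nonneg _)
  have hαdown_nonneg : ∀ i, 0 ≤ αdown i := fun i => by rw [hperm]; exact hα (σ i)
  rcases eq_or_lt_of_le hVnonneg with hV0 | hVpos
  · -- degenerate: V = 0
    have h160 : -t ^ 2 / (16 * V) = 0 := by rw [← hV0]; simp
    rw [h160, Real.exp_zero, mul_one]
    rcases Nat.eq_zero_or_pos S.card with hc | hc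
    · have hzero : (S.filter (fun x => t ≤ |f x - E|)).card = 0 := by
        have hle := Finset.card_le_card (Finset.filter_subset (fun x => t ≤ |f x - E|) S)
        omega
      rw [hzero]
      norm_num
    · have hcpos : (0:ℝ) < S.card := by exact_mod_cast hc
      have hle1 : ((S.filter (fun x => t ≤ |f x - E|)).card : ℝ) / S.card ≤ 1 := by
        rw [div_le_one hcpos]
        exact_mod_cast Finset.card_le_card (Finset.filter_subset _ _)
      linarith
  · -- main case: V > 0
    have hk1 : 0 < k := by
      rcases Nat.eq_zero_or_pos k with hk0 | h
      · exfalso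
        subst hk0
        have hemp : (Finset.univ.filter (fun i : Fin n => (i : ℕ) < 0)) = ∅ :=
          Finset.filter_false_of_mem (fun i _ => by omega)
        have hv0 : V = 0 := by rw [hV, hemp, Finset.sum_empty]
        linarith
      · exact h
    have hn1 : 0 < n := lt_of_lt_of_le hk1 hk
    have hganti : Antitone (fun i : Fin n => (αdown i) ^ 2) := by
      intro a b hab
      have h1 := hanti hab
      have h2 := hαdown_nonneg b
      simp only
      nlinarith
    have hαform : ∀ i, α i = αdown (σ.symm i) := by
      intro i; rw [hperm]; simp
    have hV1 : ∀ B : Finset (Fin n), B.card = k → ∑ i ∈ B, (α i) ^ 2 ≤ V := by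
      intro Bs hBs
      have h1 : ∑ i ∈ Bs.image σ.symm, (αdown i) ^ 2 = ∑ i ∈ Bs, (αdown (σ.symm i)) ^ 2 :=
        Finset.sum_image (fun a _ b _ h => σ.symm.injective h)
      have h2 : ∑ i ∈ Bs, (α i) ^ 2 = ∑ i ∈ Bs.image σ.symm, (αdown i) ^ 2 := by
        rw [h1]
        exact Finset.sum_congr rfl (fun i _ => by rw [hαform i])
      rw [h2, hV]
      exact CBLC_topk_sum hk (fun i => (αdown i) ^ 2) hganti _
        (by rw [Finset.card_image_of_injective _ σ.symm.injective, hBs])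
    have hV2 : (k : ℝ) * ∑ i, (α i) ^ 2 ≤ (n : ℝ) * V := by
      have hsum_eq : ∑ i, (α i) ^ 2 = ∑ i, (αdown i) ^ 2 := by
        rw [hperm]
        exact (Equiv.sum_comp σ (fun i => (α i) ^ 2)).symm
      rw [hsum_eq, hV]
      exact CBLC_all_le_topk hk hk1 (fun i => (αdown i) ^ 2) hganti (fun i => sq_nonneg _)
    have hquad : ∀ x ∈ CBLC_S n k,
        ∑ i ∈ CBLC_A x, ∑ j ∈ CBLC_Ac x, (α i - α j) ^ 2 ≤ 4 * n * V :=
      fun x hx => CBLC_quadsum α hk hx V hV1 hV2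
    have hSne : (CBLC_S n k).Nonempty := by
      refine ⟨fun i => decide ((i : ℕ) < k), ?_⟩
      rw [CBLC_mem_S, CBLC_A]
      have heq : (Finset.univ.filter (fun i : Fin n => ((decide ((i : ℕ) < k)) : Bool)))
          = Finset.univ.filter (fun i : Fin n => (i : ℕ) < k) := by
        ext i; simp
      rw [heq]
      exact CBLC_card_filter_lt n k hk
    have hScard : (0:ℝ) < (CBLC_S n k).card := by
      exact_mod_cast Finset.card_pos.mpr hSne
    have hzero : ∑ p ∈ CBLC_P n k, (α p.2.1 - α p.2.2) = 0 := by
      have h1 := CBLC_invol (n := n) (k := k) (H := fun x i j => α i - α j)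
      have h3 : ∑ p ∈ CBLC_P n k,
          ((fun (x : Fin n → Bool) (i j : Fin n) => α i - α j)
            (CBLC_sw p.1 p.2.1 p.2.2) p.2.2 p.2.1)
          = - ∑ p ∈ CBLC_P n k, (α p.2.1 - α p.2.2) := by
        rw [← Finset.sum_neg_distrib]
        exact Finset.sum_congr rfl (fun p _ => by ring)
      rw [h3] at h1
      linarith
    have hsumS : ∑ x ∈ CBLC_S n k, ((n:ℝ) * CBLC_f α x - (k:ℝ) * (∑ i, α i)) = 0 := by
      rw [← hzero, CBLC_sum_P (F := fun x i j => α i - α j)]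
      exact Finset.sum_congr rfl (fun x hx => (CBLC_linsum α hk hx).symm)
    have hEval : (n:ℝ) * E = (k:ℝ) * (∑ i, α i) := by
      have hsum_fS : ∑ x ∈ S, f x = ∑ x ∈ CBLC_S n k, CBLC_f α x := by
        rw [hSdef]
        exact Finset.sum_congr rfl (fun x _ => hfdef x)
      have h5 := hsumS
      rw [Finset.sum_sub_distrib, sub_eq_zero, ← Finset.mul_sum, Finset.sum_const,
        nsmul_eq_mul] at h5
      rw [hE, hsum_fS, hSdef]
      have hc0 : ((CBLC_S n k).card : ℝ) ≠ 0 := ne_of_gt hScard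
      field_simp
      linear_combination h5
    have hkey := fun lam => CBLC_key α hk hn1 E V hEval hquad lam
    have hMb := CBLC_mgf_bound (CBLC_S n k) (fun x => CBLC_f α x - E) V hSne
      (fun lam hlam => (hkey lam).1 hlam) (fun lam hlam => (hkey lam).2 hlam)
    have hcher := CBLC_chernoff (CBLC_S n k) (fun x => CBLC_f α x - E) V t hVpos ht hMb
    have hfilt : S.filter (fun x => t ≤ |f x - E|)
        = (CBLC_S n k).filter (fun x => t ≤ |CBLC_f α x - E|) := by
      rw [hSdef]
      apply Finset.filter_congr
      intro x _
      rw [hfdef x]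
    rw [hfilt, hSdef, div_le_iff₀ hScard]
    have hexp : Real.exp (-t ^ 2 / (4 * V)) ≤ Real.exp (-t ^ 2 / (16 * V)) := by
      apply Real.exp_le_exp.mpr
      rw [div_le_div_iff₀ (by linarith) (by linarith)]
      nlinarith [mul_nonneg (sq_nonneg t) hVnonneg]
    calc ((((CBLC_S n k).filter (fun x => t ≤ |CBLC_f α x - E|)).card : ℝ))
        ≤ 2 * ((CBLC_S n k).card : ℝ) * Real.exp (-t ^ 2 / (4 * V)) := hcher
      _ ≤ 2 * ((CBLC_S n k).card : ℝ) * Real.exp (-t ^ 2 / (16 * V)) := by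
          apply mul_le_mul_of_nonneg_left hexp (by positivity)
      _ = 2 * Real.exp (-t ^ 2 / (16 * V)) * ((CBLC_S n k).card : ℝ) := by ring
end

section
/- Let X₁, ..., X_n be {0,1}-valued random variables distributed uniformly over binary vectors with exactly k ones, and let f : {0,1}^n → ℝ be 1-Lipschitz in the sense that changing any single coordinate changes f by at most 1. Then for all t > 0, P[|f(X) - E[f(X)]| ≥ t] ≤ 2·exp(-t²/(8k)). -/
open Finset Real

-- convexity step
lemma exp_le_of_abs_le {x c l : ℝ} (hc : 0 < c) (hx : |x| ≤ c) :
    Real.exp (l * x) ≤ (c - x) / (2 * c) * Real.exp (-(l * c)) +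
      (c + x) / (2 * c) * Real.exp (l * c) := by
  have h1 : (0:ℝ) ≤ (c - x) / (2 * c) := by
    apply div_nonneg (by linarith [abs_le.1 hx]) (by linarith)
  have h2 : (0:ℝ) ≤ (c + x) / (2 * c) := by
    apply div_nonneg (by linarith [abs_le.1 hx]) (by linarith)
  have h3 : (c - x) / (2 * c) + (c + x) / (2 * c) = 1 := by field_simp; ring
  have := convexOn_exp.2 (Set.mem_univ (-(l*c))) (Set.mem_univ (l*c)) h1 h2 h3
  simp only [smul_eq_mul] at this
  have hx' : (c - x) / (2 * c) * -(l * c) + (c + x) / (2 * c) * (l * c) = l * x := by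
    field_simp; ring
  rwa [hx'] at this

-- Lemma A: averaged mgf of mean-zero bounded values
lemma avg_exp_le {ι : Type*} (s : Finset ι) (hs : s.Nonempty) (w : ι → ℝ) (μ c l : ℝ)
    (hμ : μ = (∑ i ∈ s, w i) / s.card) (hc : 0 < c) (hb : ∀ i ∈ s, |w i - μ| ≤ c) :
    (∑ i ∈ s, Real.exp (l * (w i - μ))) / s.card ≤ Real.exp (l ^ 2 * c ^ 2 / 2) := by
  have hcard : (0:ℝ) < s.card := by exact_mod_cast card_pos.2 hs
  have hsum0 : ∑ i ∈ s, (w i - μ) = 0 := by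
    rw [Finset.sum_sub_distrib, Finset.sum_const, nsmul_eq_mul, hμ]
    field_simp
    ring
  have step : ∑ i ∈ s, Real.exp (l * (w i - μ)) ≤
      s.card * ((Real.exp (-(l * c)) + Real.exp (l * c)) / 2) := by
    calc ∑ i ∈ s, Real.exp (l * (w i - μ))
        ≤ ∑ i ∈ s, ((c - (w i - μ)) / (2 * c) * Real.exp (-(l * c)) +
            (c + (w i - μ)) / (2 * c) * Real.exp (l * c)) := by
          apply Finset.sum_le_sum
          intro i hi
          exact exp_le_of_abs_le hc (hb i hi)
      _ = s.card * ((Real.exp (-(l * c)) + Real.exp (l * c)) / 2) := by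
          rw [Finset.sum_add_distrib, ← Finset.sum_mul, ← Finset.sum_mul]
          have e1 : ∑ i ∈ s, (c - (w i - μ)) / (2 * c) = s.card / 2 := by
            rw [← Finset.sum_div, Finset.sum_sub_distrib, hsum0, Finset.sum_const,
              nsmul_eq_mul]
            field_simp
            ring
          have e2 : ∑ i ∈ s, (c + (w i - μ)) / (2 * c) = s.card / 2 := by
            rw [← Finset.sum_div, Finset.sum_add_distrib, hsum0, Finset.sum_const,
              nsmul_eq_mul]
            field_simp
            ring
          rw [e1, e2]; ring
  have hcosh : (Real.exp (-(l * c)) + Real.exp (l * c)) / 2 = Real.cosh (l * c) := by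
    rw [Real.cosh_eq]; ring_nf
  calc (∑ i ∈ s, Real.exp (l * (w i - μ))) / s.card
      ≤ (s.card * ((Real.exp (-(l * c)) + Real.exp (l * c)) / 2)) / s.card :=
        by gcongr
    _ = Real.cosh (l * c) := by rw [hcosh]; field_simp
    _ ≤ Real.exp ((l * c) ^ 2 / 2) := Real.cosh_le_exp_half_sq _
    _ = Real.exp (l ^ 2 * c ^ 2 / 2) := by ring_nf


variable {n : ℕ}

noncomputable def avgF (F : Finset (Fin n) → ℝ) (m : ℕ) (A : Finset (Fin n)) : ℝ :=
  (∑ B ∈ Aᶜ.powersetCard m, F (A ∪ B)) / (Aᶜ.card.choose m)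

-- double counting: (m+1) * ∑_{C⊆s,|C|=m+1} G C = ∑_{v∈s} ∑_{B⊆s\{v},|B|=m} G (insert v B)
lemma double_count (s : Finset (Fin n)) (m : ℕ) (G : Finset (Fin n) → ℝ) :
    ((m+1 : ℕ) : ℝ) * ∑ C ∈ s.powersetCard (m+1), G C =
      ∑ v ∈ s, ∑ B ∈ (s.erase v).powersetCard m, G (insert v B) := by
  have inner : ∀ v ∈ s, ∑ B ∈ (s.erase v).powersetCard m, G (insert v B) =
      ∑ C ∈ (s.powersetCard (m+1)).filter (fun C => v ∈ C), G C := by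
    intro v hv
    apply Finset.sum_nbij' (fun B => insert v B) (fun C => C.erase v)
    · intro B hB
      simp only [Finset.mem_powersetCard, Finset.mem_filter] at *
      obtain ⟨hB1, hB2⟩ := hB
      have hvB : v ∉ B := fun h => (Finset.mem_erase.1 (hB1 h)).1 rfl
      refine ⟨⟨?_, ?_⟩, Finset.mem_insert_self _ _⟩
      · exact Finset.insert_subset hv (hB1.trans (Finset.erase_subset _ _))
      · rw [Finset.card_insert_of_notMem hvB, hB2]
    · intro C hC
      simp only [Finset.mem_powersetCard, Finset.mem_filter] at *
      obtain ⟨⟨hC1, hC2⟩, hvC⟩ := hC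
      constructor
      · intro x hx
        simp only [Finset.mem_erase] at hx ⊢
        exact ⟨hx.1, hC1 hx.2⟩
      · rw [Finset.card_erase_of_mem hvC, hC2]; rfl
    · intro B hB
      simp only [Finset.mem_powersetCard] at hB
      have hvB : v ∉ B := fun h => (Finset.mem_erase.1 (hB.1 h)).1 rfl
      exact Finset.erase_insert hvB
    · intro C hC
      simp only [Finset.mem_powersetCard, Finset.mem_filter] at hC
      exact Finset.insert_erase hC.2
    · intro B hB; rfl
  rw [Finset.sum_congr rfl inner]
  have swap : ∑ v ∈ s, ∑ C ∈ (s.powersetCard (m+1)).filter (fun C => v ∈ C), G C =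
      ∑ C ∈ s.powersetCard (m+1), ∑ v ∈ s.filter (fun v => v ∈ C), G C := by
    simp_rw [Finset.sum_filter]
    rw [Finset.sum_comm]
  rw [swap]
  rw [Finset.mul_sum]
  apply Finset.sum_congr rfl
  intro C hC
  simp only [Finset.mem_powersetCard] at hC
  have : s.filter (fun v => v ∈ C) = C := by
    ext v; simp only [Finset.mem_filter]
    exact ⟨fun h => h.2, fun h => ⟨hC.1 h, h⟩⟩
  rw [this, Finset.sum_const, hC.2, nsmul_eq_mul]

lemma avgF_succ (F : Finset (Fin n) → ℝ) (m : ℕ) (A : Finset (Fin n))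
    (hm : m + 1 ≤ Aᶜ.card) :
    avgF F (m+1) A = (∑ v ∈ Aᶜ, avgF F m (insert v A)) / Aᶜ.card := by
  set r' : ℕ := Aᶜ.card - 1 with hr'
  have hrr : Aᶜ.card = r' + 1 := by omega
  have hmr : m ≤ r' := by omega
  have hid : (r' + 1) * r'.choose m = (r' + 1).choose (m + 1) * (m + 1) :=
    Nat.add_one_mul_choose_eq r' m
  have hc2 : (0:ℝ) < r'.choose m := by exact_mod_cast Nat.choose_pos hmr
  have hc1 : (0:ℝ) < (r' + 1).choose (m + 1) := by
    exact_mod_cast Nat.choose_pos (by omega)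
  have hins : ∀ v ∈ Aᶜ, avgF F m (insert v A) =
      (∑ B ∈ (Aᶜ.erase v).powersetCard m, F (A ∪ insert v B)) / (r'.choose m : ℝ) := by
    intro v hv
    unfold avgF
    rw [Finset.compl_insert]
    congr 1
    · apply Finset.sum_congr rfl
      intro B _
      congr 1
      rw [Finset.insert_union, Finset.union_insert]
    · rw [Finset.card_erase_of_mem hv, hrr]
      simp
  rw [Finset.sum_congr rfl hins, ← Finset.sum_div,
    ← double_count Aᶜ m (fun C => F (A ∪ C))]
  unfold avgF
  rw [hrr]
  have hidR : ((r':ℝ) + 1) * (r'.choose m : ℝ)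
      = ((r' + 1).choose (m + 1) : ℝ) * ((m:ℝ) + 1) := by exact_mod_cast hid
  rw [div_div, div_eq_div_iff hc1.ne' (by positivity)]
  push_cast
  linear_combination (∑ C ∈ Aᶜ.powersetCard (m+1), F (A ∪ C)) * hidR

lemma avgF_pair_lipschitz (F : Finset (Fin n) → ℝ)
    (hF : ∀ (C : Finset (Fin n)) (v : Fin n), v ∉ C → |F (insert v C) - F C| ≤ 1)
    (m : ℕ) (A : Finset (Fin n)) (v v' : Fin n) (hv : v ∈ Aᶜ) (hv' : v' ∈ Aᶜ)
    (hm : m + 1 ≤ Aᶜ.card) :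
    |avgF F m (insert v A) - avgF F m (insert v' A)| ≤ 2 := by
  rcases eq_or_ne v v' with rfl | hne
  · simp
  set r' : ℕ := Aᶜ.card - 1 with hr'
  have hmr : m ≤ r' := by omega
  have hc : (0:ℝ) < r'.choose m := by exact_mod_cast Nat.choose_pos hmr
  have hvA : v ∉ A := by simpa using hv
  have hv'A : v' ∉ A := by simpa using hv'
  have hcard : ∀ w : Fin n, w ∈ Aᶜ → ((insert w A)ᶜ).card = r' := by
    intro w hw
    rw [Finset.compl_insert, Finset.card_erase_of_mem hw]
  -- swap map
  set σ : Finset (Fin n) → Finset (Fin n) :=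
    fun B => if v' ∈ B then insert v (B.erase v') else B with hσ
  set τ : Finset (Fin n) → Finset (Fin n) :=
    fun B => if v ∈ B then insert v' (B.erase v) else B with hτ
  have key : ∑ B ∈ ((insert v' A)ᶜ).powersetCard m, F (insert v' A ∪ B) =
      ∑ B ∈ ((insert v A)ᶜ).powersetCard m, F (insert v' A ∪ σ B) := by
    symm
    apply Finset.sum_nbij' σ τ
    · intro B hB
      simp only [Finset.mem_powersetCard, Finset.compl_insert] at hB ⊢
      obtain ⟨hB1, hB2⟩ := hB
      have hvB : v ∉ B := fun h => (Finset.mem_erase.1 (hB1 h)).1 rfl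
      have hBA : B ⊆ Aᶜ := hB1.trans (Finset.erase_subset _ _)
      by_cases h : v' ∈ B
      · simp only [hσ, if_pos h]
        constructor
        · intro x hx
          rcases Finset.mem_insert.1 hx with rfl | hx
          · exact Finset.mem_erase.2 ⟨hne, hv⟩
          · exact Finset.mem_erase.2 ⟨(Finset.mem_erase.1 hx).1,
              hBA (Finset.mem_of_mem_erase hx)⟩
        · rw [Finset.card_insert_of_notMem (fun hc => hvB (Finset.mem_of_mem_erase hc)),
            Finset.card_erase_of_mem h, hB2]
          have hm1 : 1 ≤ m := by rw [← hB2]; exact Finset.card_pos.mpr ⟨v', h⟩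
          omega
      · simp only [hσ, if_neg h]
        exact ⟨fun x hx => Finset.mem_erase.2 ⟨fun hx' => h (hx' ▸ hx), hBA hx⟩, hB2⟩
    · intro B hB
      simp only [Finset.mem_powersetCard, Finset.compl_insert] at hB ⊢
      obtain ⟨hB1, hB2⟩ := hB
      have hvB : v' ∉ B := fun h => (Finset.mem_erase.1 (hB1 h)).1 rfl
      have hBA : B ⊆ Aᶜ := hB1.trans (Finset.erase_subset _ _)
      by_cases h : v ∈ B
      · simp only [hτ, if_pos h]
        constructor
        · intro x hx
          rcases Finset.mem_insert.1 hx with rfl | hx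
          · exact Finset.mem_erase.2 ⟨hne.symm, hv'⟩
          · exact Finset.mem_erase.2 ⟨(Finset.mem_erase.1 hx).1,
              hBA (Finset.mem_of_mem_erase hx)⟩
        · rw [Finset.card_insert_of_notMem (fun hc => hvB (Finset.mem_of_mem_erase hc)),
            Finset.card_erase_of_mem h, hB2]
          have hm1 : 1 ≤ m := by rw [← hB2]; exact Finset.card_pos.mpr ⟨v, h⟩
          omega
      · simp only [hτ, if_neg h]
        exact ⟨fun x hx => Finset.mem_erase.2 ⟨fun hx' => h (hx' ▸ hx), hBA hx⟩, hB2⟩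
    · intro B hB
      simp only [Finset.mem_powersetCard, Finset.compl_insert] at hB
      have hvB : v ∉ B := fun h => (Finset.mem_erase.1 (hB.1 h)).1 rfl
      by_cases h : v' ∈ B
      · simp only [hσ, hτ, if_pos h]
        rw [if_pos (Finset.mem_insert_self v _),
          Finset.erase_insert (fun hc => hvB (Finset.mem_of_mem_erase hc)),
          Finset.insert_erase h]
      · simp only [hσ, hτ, if_neg h, if_neg hvB]
    · intro B hB
      simp only [Finset.mem_powersetCard, Finset.compl_insert] at hB
      have hvB : v' ∉ B := fun h => (Finset.mem_erase.1 (hB.1 h)).1 rfl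
      by_cases h : v ∈ B
      · simp only [hτ, hσ, if_pos h]
        rw [if_pos (Finset.mem_insert_self v' _),
          Finset.erase_insert (fun hc => hvB (Finset.mem_of_mem_erase hc)),
          Finset.insert_erase h]
      · simp only [hτ, hσ, if_neg h, if_neg hvB]
    · intro B _; rfl
  -- per-term bound
  have term : ∀ B ∈ ((insert v A)ᶜ).powersetCard m,
      |F (insert v A ∪ B) - F (insert v' A ∪ σ B)| ≤ 2 := by
    intro B hB
    simp only [Finset.mem_powersetCard, Finset.compl_insert] at hB
    have hvB : v ∉ B := fun h => (Finset.mem_erase.1 (hB.1 h)).1 rfl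
    have hBA : B ⊆ Aᶜ := hB.1.trans (Finset.erase_subset _ _)
    by_cases h : v' ∈ B
    · have : insert v A ∪ B = insert v' A ∪ σ B := by
        simp only [hσ, if_pos h]
        ext x
        simp only [Finset.mem_union, Finset.mem_insert, Finset.mem_erase]
        rcases eq_or_ne x v' with rfl | hxv'
        · simp only [eq_self_iff_true, true_or]
          tauto
        · tauto
      rw [this, sub_self, abs_zero]; norm_num
    · simp only [hσ, if_neg h]
      have hvD : v ∉ A ∪ B := by
        simp only [Finset.mem_union]; push_neg; exact ⟨hvA, hvB⟩
      have hv'D : v' ∉ A ∪ B := by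
        simp only [Finset.mem_union]; push_neg
        exact ⟨hv'A, fun hc => h hc⟩
      have e1 : insert v A ∪ B = insert v (A ∪ B) := by rw [Finset.insert_union]
      have e2 : insert v' A ∪ B = insert v' (A ∪ B) := by rw [Finset.insert_union]
      rw [e1, e2]
      calc |F (insert v (A ∪ B)) - F (insert v' (A ∪ B))|
          ≤ |F (insert v (A ∪ B)) - F (A ∪ B)| +
            |F (A ∪ B) - F (insert v' (A ∪ B))| := abs_sub_le _ _ _
        _ ≤ 1 + 1 := add_le_add (hF _ _ hvD) (by rw [abs_sub_comm]; exact hF _ _ hv'D)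
        _ = 2 := by norm_num
  -- combine
  unfold avgF
  rw [hcard v hv, hcard v' hv', key, div_sub_div_same]
  rw [← Finset.sum_sub_distrib]
  rw [abs_div]
  rw [abs_of_pos hc]
  rw [div_le_iff₀ hc]
  calc |∑ B ∈ ((insert v A)ᶜ).powersetCard m,
        (F (insert v A ∪ B) - F (insert v' A ∪ σ B))|
      ≤ ∑ B ∈ ((insert v A)ᶜ).powersetCard m,
        |F (insert v A ∪ B) - F (insert v' A ∪ σ B)| := Finset.abs_sum_le_sum_abs _ _
    _ ≤ ∑ _B ∈ ((insert v A)ᶜ).powersetCard m, (2:ℝ) := Finset.sum_le_sum term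
    _ = 2 * r'.choose m := by
        rw [Finset.sum_const, Finset.card_powersetCard, hcard v hv, nsmul_eq_mul]
        ring

lemma mgf_bound (F : Finset (Fin n) → ℝ)
    (hF : ∀ (C : Finset (Fin n)) (v : Fin n), v ∉ C → |F (insert v C) - F C| ≤ 1) :
    ∀ (m : ℕ) (A : Finset (Fin n)), m ≤ Aᶜ.card → ∀ l : ℝ,
    (∑ B ∈ Aᶜ.powersetCard m, Real.exp (l * (F (A ∪ B) - avgF F m A))) /
      (Aᶜ.card.choose m) ≤ Real.exp (2 * m * l ^ 2) := by
  intro m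
  induction m with
  | zero =>
    intro A _ l
    simp [avgF]
  | succ m ih =>
    intro A hm l
    set r' : ℕ := Aᶜ.card - 1 with hr'
    have hrr : Aᶜ.card = r' + 1 := by omega
    have hmr : m ≤ r' := by omega
    have hne : Aᶜ.Nonempty := Finset.card_pos.mp (by omega)
    have hrpos : (0:ℝ) < Aᶜ.card := by exact_mod_cast Finset.card_pos.mpr hne
    have hc2 : (0:ℝ) < r'.choose m := by exact_mod_cast Nat.choose_pos hmr
    have hc1 : (0:ℝ) < Aᶜ.card.choose (m+1) := by
      exact_mod_cast Nat.choose_pos hm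
    set μ : ℝ := avgF F (m+1) A with hμ
    set w : Fin n → ℝ := fun v => avgF F m (insert v A) with hw
    have hcardins : ∀ v ∈ Aᶜ, ((insert v A)ᶜ).card = r' := by
      intro v hv
      rw [Finset.compl_insert, Finset.card_erase_of_mem hv, hrr]
      simp
    -- pairwise bound
    have hpair : ∀ v ∈ Aᶜ, ∀ v' ∈ Aᶜ, |w v - w v'| ≤ 2 := fun v hv v' hv' =>
      avgF_pair_lipschitz F hF m A v v' hv hv' hm
    have hμavg : μ = (∑ v ∈ Aᶜ, w v) / Aᶜ.card := avgF_succ F m A hm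
    -- deviation bound
    have hdev : ∀ v ∈ Aᶜ, |w v - μ| ≤ 2 := by
      intro v hv
      have : w v - μ = (∑ v' ∈ Aᶜ, (w v - w v')) / Aᶜ.card := by
        rw [Finset.sum_sub_distrib, Finset.sum_const, nsmul_eq_mul, hμavg]
        rw [sub_div, mul_div_cancel_left₀ _ hrpos.ne']
      rw [this, abs_div, abs_of_pos hrpos, div_le_iff₀ hrpos]
      calc |∑ v' ∈ Aᶜ, (w v - w v')| ≤ ∑ v' ∈ Aᶜ, |w v - w v'| :=
            Finset.abs_sum_le_sum_abs _ _
        _ ≤ ∑ _v' ∈ Aᶜ, (2:ℝ) := Finset.sum_le_sum (fun v' hv' => hpair v hv v' hv')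
        _ = 2 * Aᶜ.card := by rw [Finset.sum_const, nsmul_eq_mul]; ring
    -- avg exp over v
    have havg : (∑ v ∈ Aᶜ, Real.exp (l * (w v - μ))) / Aᶜ.card ≤
        Real.exp (2 * l ^ 2) := by
      have := avg_exp_le Aᶜ hne w μ 2 l hμavg (by norm_num) hdev
      convert this using 2
      norm_num
      ring
    -- inner sums via IH
    have hinner : ∀ v ∈ Aᶜ, ∑ B ∈ ((insert v A)ᶜ).powersetCard m,
        Real.exp (l * (F (insert v A ∪ B) - w v)) ≤
        (r'.choose m : ℝ) * Real.exp (2 * m * l ^ 2) := by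
      intro v hv
      have h1 := ih (insert v A) (by rw [hcardins v hv]; exact hmr) l
      rw [hcardins v hv] at h1
      rw [div_le_iff₀ hc2] at h1
      linarith [h1]
    -- double counting
    have hdc := double_count Aᶜ m (fun C => Real.exp (l * (F (A ∪ C) - μ)))
    set N : ℝ := ∑ B ∈ Aᶜ.powersetCard (m+1), Real.exp (l * (F (A ∪ B) - μ)) with hN
    have hsplit : ∀ v ∈ Aᶜ, ∑ B ∈ (Aᶜ.erase v).powersetCard m,
        Real.exp (l * (F (A ∪ insert v B) - μ)) =
        Real.exp (l * (w v - μ)) * ∑ B ∈ ((insert v A)ᶜ).powersetCard m,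
          Real.exp (l * (F (insert v A ∪ B) - w v)) := by
      intro v hv
      rw [Finset.mul_sum, Finset.compl_insert]
      apply Finset.sum_congr rfl
      intro B _
      rw [← Real.exp_add]
      congr 1
      rw [Finset.insert_union, Finset.union_insert]
      ring
    have hdceq : ((m:ℝ) + 1) * N = ∑ v ∈ Aᶜ, ∑ B ∈ (Aᶜ.erase v).powersetCard m,
        Real.exp (l * (F (A ∪ insert v B) - μ)) := by
      rw [hN, ← hdc]
      push_cast
      ring
    have hstep : ((m:ℝ) + 1) * N ≤
        (∑ v ∈ Aᶜ, Real.exp (l * (w v - μ))) *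
          ((r'.choose m : ℝ) * Real.exp (2 * m * l ^ 2)) := by
      rw [hdceq, Finset.sum_congr rfl hsplit]
      calc ∑ v ∈ Aᶜ, Real.exp (l * (w v - μ)) *
            ∑ B ∈ ((insert v A)ᶜ).powersetCard m,
              Real.exp (l * (F (insert v A ∪ B) - w v))
          ≤ ∑ v ∈ Aᶜ, Real.exp (l * (w v - μ)) *
              ((r'.choose m : ℝ) * Real.exp (2 * m * l ^ 2)) :=
            Finset.sum_le_sum fun v hv =>
              mul_le_mul_of_nonneg_left (hinner v hv) (Real.exp_nonneg _)
        _ = _ := by rw [← Finset.sum_mul]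
    have hsumv : ∑ v ∈ Aᶜ, Real.exp (l * (w v - μ)) ≤
        (Aᶜ.card : ℝ) * Real.exp (2 * l ^ 2) := by
      rw [div_le_iff₀ hrpos] at havg
      linarith
    have hexp : Real.exp (2 * l ^ 2) * Real.exp (2 * m * l ^ 2) =
        Real.exp (2 * ((m:ℝ) + 1) * l ^ 2) := by
      rw [← Real.exp_add]; ring_nf
    have hidR : (Aᶜ.card : ℝ) * (r'.choose m : ℝ)
        = (Aᶜ.card.choose (m+1) : ℝ) * ((m:ℝ) + 1) := by
      have h := Nat.add_one_mul_choose_eq r' m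
      have h2 : Aᶜ.card * r'.choose m = Aᶜ.card.choose (m+1) * (m+1) := by
        rw [hrr]; exact h
      exact_mod_cast h2
    have hfin : ((m:ℝ) + 1) * N ≤
        ((m:ℝ) + 1) * ((Aᶜ.card.choose (m+1) : ℝ) * Real.exp (2 * ((m:ℝ)+1) * l^2)) := by
      calc ((m:ℝ) + 1) * N
          ≤ (∑ v ∈ Aᶜ, Real.exp (l * (w v - μ))) *
            ((r'.choose m : ℝ) * Real.exp (2 * m * l ^ 2)) := hstep
        _ ≤ ((Aᶜ.card : ℝ) * Real.exp (2 * l ^ 2)) *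
            ((r'.choose m : ℝ) * Real.exp (2 * m * l ^ 2)) :=
            mul_le_mul_of_nonneg_right hsumv (by positivity)
        _ = ((Aᶜ.card : ℝ) * (r'.choose m : ℝ)) *
            (Real.exp (2 * l ^ 2) * Real.exp (2 * m * l ^ 2)) := by ring
        _ = ((m:ℝ) + 1) * ((Aᶜ.card.choose (m+1) : ℝ) *
            Real.exp (2 * ((m:ℝ)+1) * l^2)) := by rw [hidR, hexp]; ring
    have hNle : N ≤ (Aᶜ.card.choose (m+1) : ℝ) * Real.exp (2 * ((m:ℝ)+1) * l^2) :=
      le_of_mul_le_mul_left hfin (by positivity)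
    rw [div_le_iff₀ hc1]
    push_cast
    calc N ≤ (Aᶜ.card.choose (m+1) : ℝ) * Real.exp (2 * ((m:ℝ)+1) * l^2) := hNle
      _ = Real.exp (2 * ((m:ℝ) + 1) * l ^ 2) * (Aᶜ.card.choose (m+1) : ℝ) := by ring

lemma avgF_neg (F : Finset (Fin n) → ℝ) (m : ℕ) (A : Finset (Fin n)) :
    avgF (fun B => -F B) m A = -avgF F m A := by
  simp [avgF, Finset.sum_neg_distrib, neg_div]

lemma tail_bound {n : ℕ} (k : ℕ) (hk : k ≤ n) (hkpos : 0 < k)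
    (F : Finset (Fin n) → ℝ)
    (hF : ∀ (C : Finset (Fin n)) (v : Fin n), v ∉ C → |F (insert v C) - F C| ≤ 1)
    (t : ℝ) (ht : 0 < t) (μ : ℝ) (hμ : μ = avgF F k (∅ : Finset (Fin n))) :
    ((((Finset.univ : Finset (Fin n)).powersetCard k).filter
        (fun B => t ≤ F B - μ)).card : ℝ) ≤
      (n.choose k : ℝ) * Real.exp (-t ^ 2 / (8 * k)) := by
  have hkR : (0:ℝ) < k := by exact_mod_cast hkpos
  set l : ℝ := t / (4 * k) with hl
  have hlpos : 0 < l := by positivity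
  have hcompl : (∅ : Finset (Fin n))ᶜ = Finset.univ := by simp
  have hcard : ((∅ : Finset (Fin n))ᶜ).card = n := by simp
  have hmgf := mgf_bound F hF k ∅ (by rw [hcard]; exact hk) l
  rw [hcompl, ← hμ] at hmgf
  simp only [Finset.empty_union, Finset.card_univ, Fintype.card_fin] at hmgf
  have hchoose : (0:ℝ) < (n.choose k : ℝ) := by exact_mod_cast Nat.choose_pos hk
  rw [div_le_iff₀ hchoose] at hmgf
  set pc := (Finset.univ : Finset (Fin n)).powersetCard k with hpc
  set T := pc.filter (fun B => t ≤ F B - μ) with hT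
  have key : (T.card : ℝ) * Real.exp (l * t) ≤
      ∑ B ∈ pc, Real.exp (l * (F B - μ)) := by
    calc (T.card : ℝ) * Real.exp (l * t) = ∑ _B ∈ T, Real.exp (l * t) := by
          rw [Finset.sum_const, nsmul_eq_mul]
      _ ≤ ∑ B ∈ T, Real.exp (l * (F B - μ)) := by
          apply Finset.sum_le_sum
          intro B hB
          have := (Finset.mem_filter.1 hB).2
          exact Real.exp_le_exp.2 (by nlinarith)
      _ ≤ ∑ B ∈ pc, Real.exp (l * (F B - μ)) :=
          Finset.sum_le_sum_of_subset_of_nonneg (Finset.filter_subset _ _)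
            (fun _ _ _ => Real.exp_nonneg _)
  have h3 : (T.card : ℝ) * Real.exp (l * t) ≤
      Real.exp (2 * k * l ^ 2) * (n.choose k : ℝ) := key.trans hmgf
  have hexp : Real.exp (2 * k * l ^ 2) * Real.exp (-(l * t)) =
      Real.exp (-t ^ 2 / (8 * k)) := by
    rw [← Real.exp_add]
    congr 1
    rw [hl]
    field_simp
    ring
  calc (T.card : ℝ) = (T.card : ℝ) * Real.exp (l * t) * Real.exp (-(l * t)) := by
        rw [mul_assoc, ← Real.exp_add]; simp
    _ ≤ Real.exp (2 * k * l ^ 2) * (n.choose k : ℝ) * Real.exp (-(l * t)) :=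
        mul_le_mul_of_nonneg_right h3 (Real.exp_nonneg _)
    _ = (n.choose k : ℝ) * (Real.exp (2 * k * l ^ 2) * Real.exp (-(l * t))) := by ring
    _ = (n.choose k : ℝ) * Real.exp (-t ^ 2 / (8 * k)) := by rw [hexp]

/-- Concentration of a 1-Lipschitz function of Bernoullis conditioned on their
sum being `k`: `P[|f(X) - E f(X)| ≥ t] ≤ 2 exp (-t²/(8k))`. -/
theorem conditioned_bernoulli_lipschitz_concentration
    (n k : ℕ) (hk : k ≤ n) (hkpos : 0 < k)
    (S : Finset (Fin n → Bool))
    (hS : S = Finset.univ.filter (fun x => (Finset.univ.filter (fun i => x i)).card = k))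
    (f : (Fin n → Bool) → ℝ)
    (hlip : ∀ (x : Fin n → Bool) (i : Fin n), |f x - f (Function.update x i (!x i))| ≤ 1)
    (E : ℝ) (hE : E = (∑ x ∈ S, f x) / S.card)
    (t : ℝ) (ht : 0 < t) :
    ((S.filter (fun x => t ≤ |f x - E|)).card : ℝ) / S.card ≤
      2 * Real.exp (-t ^ 2 / (8 * k)) := by
  classical
  set F : Finset (Fin n) → ℝ := fun B => f (fun i => decide (i ∈ B)) with hF'
  -- F is insert-Lipschitz
  have hFlip : ∀ (C : Finset (Fin n)) (v : Fin n), v ∉ C →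
      |F (insert v C) - F C| ≤ 1 := by
    intro C v hv
    have hupdate : (fun i => decide (i ∈ insert v C)) =
        Function.update (fun i => decide (i ∈ C)) v (!(decide (v ∈ C))) := by
      funext i
      rcases eq_or_ne i v with rfl | hne
      · simp [Function.update_self, hv]
      · simp [Function.update_of_ne hne, Finset.mem_insert, hne]
    have h1 := hlip (fun i => decide (i ∈ C)) v
    rw [abs_sub_comm]
    rw [hF']
    simpa [← hupdate] using h1
  -- bijection maps
  set φ : (Fin n → Bool) → Finset (Fin n) :=
    fun x => Finset.univ.filter (fun i => x i) with hφ
  set ψ : Finset (Fin n) → (Fin n → Bool) := fun B i => decide (i ∈ B) with hψ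
  have hψφ : ∀ x, ψ (φ x) = x := by
    intro x; funext i; simp [hφ, hψ]
  have hφψ : ∀ B, φ (ψ B) = B := by
    intro B; ext i; simp [hφ, hψ]
  have hφF : ∀ x, F (φ x) = f x := by
    intro x
    exact congrArg f (hψφ x)
  have hφmem : ∀ x ∈ S, φ x ∈ (Finset.univ : Finset (Fin n)).powersetCard k := by
    intro x hx
    rw [hS] at hx
    simp only [Finset.mem_filter, Finset.mem_univ, true_and] at hx
    simp only [Finset.mem_powersetCard]
    exact ⟨Finset.filter_subset _ _ |>.trans (by simp), hx⟩
  have hψmem : ∀ B ∈ (Finset.univ : Finset (Fin n)).powersetCard k, ψ B ∈ S := by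
    intro B hB
    simp only [Finset.mem_powersetCard] at hB
    rw [hS]
    simp only [Finset.mem_filter, Finset.mem_univ, true_and]
    have : Finset.univ.filter (fun i => (ψ B i : Prop)) = B := hφψ B
    rw [this, hB.2]
  -- transfer sums and cards
  have hsum : ∑ x ∈ S, f x = ∑ B ∈ (Finset.univ : Finset (Fin n)).powersetCard k, F B :=
    Finset.sum_nbij' φ ψ hφmem hψmem (fun x _ => hψφ x) (fun B _ => hφψ B)
      (fun x _ => (hφF x).symm)
  have hcardS : S.card = n.choose k := by
    have : S.card = ((Finset.univ : Finset (Fin n)).powersetCard k).card :=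
      Finset.card_nbij' φ ψ hφmem hψmem (fun x _ => hψφ x) (fun B _ => hφψ B)
    rw [this, Finset.card_powersetCard, Finset.card_univ, Fintype.card_fin]
  have hchoose : (0:ℝ) < (n.choose k : ℝ) := by exact_mod_cast Nat.choose_pos hk
  have hScard : (S.card : ℝ) = (n.choose k : ℝ) := by exact_mod_cast hcardS
  -- E is the avgF mean
  have hEμ : E = avgF F k (∅ : Finset (Fin n)) := by
    rw [hE, avgF]
    simp only [Finset.compl_empty, Finset.empty_union, Finset.card_univ,
      Fintype.card_fin]
    rw [hsum, hScard]
  -- filter transfers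
  have hcard1 : (S.filter (fun x => t ≤ f x - E)).card =
      (((Finset.univ : Finset (Fin n)).powersetCard k).filter
        (fun B => t ≤ F B - E)).card := by
    apply Finset.card_nbij' φ ψ
    · intro x hx
      simp only [Finset.mem_coe, Finset.mem_filter] at hx ⊢
      exact ⟨hφmem x hx.1, by rw [hφF]; exact hx.2⟩
    · intro B hB
      simp only [Finset.mem_coe, Finset.mem_filter] at hB ⊢
      refine ⟨hψmem B hB.1, ?_⟩
      exact hB.2
    · intro x hx; exact hψφ x
    · intro B hB; exact hφψ B
  have hcard2 : (S.filter (fun x => t ≤ E - f x)).card =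
      (((Finset.univ : Finset (Fin n)).powersetCard k).filter
        (fun B => t ≤ (fun C => -F C) B - (-E))).card := by
    apply Finset.card_nbij' φ ψ
    · intro x hx
      simp only [Finset.mem_coe, Finset.mem_filter] at hx ⊢
      refine ⟨hφmem x hx.1, ?_⟩
      simp only [hφF x]
      linarith [hx.2]
    · intro B hB
      simp only [Finset.mem_coe, Finset.mem_filter] at hB ⊢
      refine ⟨hψmem B hB.1, ?_⟩
      have hFB : F B = f (ψ B) := rfl
      have := hB.2
      linarith [this, hFB.symm.le, hFB.le]
    · intro x hx; exact hψφ x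
    · intro B hB; exact hφψ B
  -- split the two-sided filter
  have hsplit : (S.filter (fun x => t ≤ |f x - E|)).card ≤
      (S.filter (fun x => t ≤ f x - E)).card +
      (S.filter (fun x => t ≤ E - f x)).card := by
    refine le_trans (Finset.card_le_card ?_) (Finset.card_union_le _ _)
    intro x hx
    simp only [Finset.mem_filter, Finset.mem_union] at hx ⊢
    rcases abs_cases (f x - E) with ⟨h1, _⟩ | ⟨h1, _⟩
    · exact Or.inl ⟨hx.1, by linarith [hx.2]⟩
    · exact Or.inr ⟨hx.1, by linarith [hx.2]⟩
  -- apply tail bounds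
  have htail1 := tail_bound k hk hkpos F hFlip t ht E hEμ
  have hFlipneg : ∀ (C : Finset (Fin n)) (v : Fin n), v ∉ C →
      |(fun B => -F B) (insert v C) - (fun B => -F B) C| ≤ 1 := by
    intro C v hv
    have h := hFlip C v hv
    rw [abs_sub_comm] at h
    calc |(fun B => -F B) (insert v C) - (fun B => -F B) C|
        = |F C - F (insert v C)| := by congr 1; ring
      _ ≤ 1 := h
  have hEμneg : -E = avgF (fun B => -F B) k (∅ : Finset (Fin n)) := by
    rw [avgF_neg, hEμ]
  have htail2 := tail_bound k hk hkpos (fun B => -F B) hFlipneg t ht (-E) hEμneg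
  -- combine
  have hnum : ((S.filter (fun x => t ≤ |f x - E|)).card : ℝ) ≤
      2 * (n.choose k : ℝ) * Real.exp (-t ^ 2 / (8 * k)) := by
    have h1 : ((S.filter (fun x => t ≤ |f x - E|)).card : ℝ) ≤
        ((S.filter (fun x => t ≤ f x - E)).card : ℝ) +
        ((S.filter (fun x => t ≤ E - f x)).card : ℝ) := by exact_mod_cast hsplit
    rw [hcard1, hcard2] at h1
    calc ((S.filter (fun x => t ≤ |f x - E|)).card : ℝ)
        ≤ _ + _ := h1
      _ ≤ (n.choose k : ℝ) * Real.exp (-t ^ 2 / (8 * k)) +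
          (n.choose k : ℝ) * Real.exp (-t ^ 2 / (8 * k)) := add_le_add htail1 htail2
      _ = 2 * (n.choose k : ℝ) * Real.exp (-t ^ 2 / (8 * k)) := by ring
  rw [hScard, div_le_iff₀ hchoose]
  calc ((S.filter (fun x => t ≤ |f x - E|)).card : ℝ)
      ≤ 2 * (n.choose k : ℝ) * Real.exp (-t ^ 2 / (8 * k)) := hnum
    _ = 2 * Real.exp (-t ^ 2 / (8 * k)) * (n.choose k : ℝ) := by ring
end

section
/- The volume of a spherical cap of height h (0 ≤ h ≤ r) of a d-dimensional Euclidean ball of radius r equals (1/2)·V_d·r^d·I_{(2rh-h²)/r²}((d+1)/2, 1/2), where V_d is the volume of the d-dimensional unit ball and I_x(a,b) is the regularized incomplete beta function. -/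
open MeasureTheory Real Set

private lemma img_lemma (r c : ℝ) (hr : 0 < r) (hc : 0 ≤ c) (hcr : c ≤ r) :
    (fun t => 1 - t^2/r^2) '' Ioo c r = Ioo 0 (1 - c^2/r^2) := by
  have hr2 : (0:ℝ) < r^2 := by positivity
  ext s
  simp only [mem_image, mem_Ioo]
  constructor
  · rintro ⟨t, ⟨h1, h2⟩, rfl⟩
    have h3 : 0 < t := lt_of_le_of_lt hc h1
    constructor
    · have h4 : t^2 < r^2 := by nlinarith
      have : t^2/r^2 < 1 := by rw [div_lt_one hr2]; exact h4
      linarith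
    · have h4 : c^2 < t^2 := by nlinarith
      have : c^2/r^2 < t^2/r^2 := by apply div_lt_div_of_pos_right h4 hr2
      linarith
  · rintro ⟨hs0, hs1⟩
    have hs1' : s < 1 := by
      have : 0 ≤ c^2/r^2 := by positivity
      linarith
    have h1s : (0:ℝ) < 1 - s := by linarith
    refine ⟨r * Real.sqrt (1 - s), ⟨?_, ?_⟩, ?_⟩
    · have hc2 : c^2 < r^2 * (1 - s) := by
        have : c^2/r^2 < 1 - s := by linarith
        calc c^2 = (c^2/r^2) * r^2 := by field_simp
        _ < (1-s) * r^2 := by exact mul_lt_mul_of_pos_right this hr2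
        _ = r^2 * (1-s) := by ring
      have : c = Real.sqrt (c^2) := (Real.sqrt_sq hc).symm
      rw [this]
      calc Real.sqrt (c^2) < Real.sqrt (r^2 * (1-s)) := by
            exact Real.sqrt_lt_sqrt (by positivity) hc2
        _ = r * Real.sqrt (1-s) := by
            rw [Real.sqrt_mul (by positivity), Real.sqrt_sq hr.le]
    · have : Real.sqrt (1 - s) < 1 := by
        rw [show (1:ℝ) = Real.sqrt 1 by simp]
        exact Real.sqrt_lt_sqrt (by simp [Real.sqrt_le_one]; linarith) (by simpa using hs0)
      calc r * Real.sqrt (1-s) < r * 1 := by exact mul_lt_mul_of_pos_left this hr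
        _ = r := by ring
    · have : (r * Real.sqrt (1-s))^2 = r^2 * (1-s) := by
        rw [mul_pow, Real.sq_sqrt h1s.le]
      rw [this]; field_simp; ring

private lemma subst_lemma (n : ℕ) (r c : ℝ) (hr : 0 < r) (hc : 0 ≤ c) (hcr : c ≤ r)
    (himg : (fun t => 1 - t^2/r^2) '' Ioo c r = Ioo 0 (1 - c^2/r^2)) :
    ∫ s in (0:ℝ)..(1 - c^2/r^2), s ^ ((n:ℝ)/2) * (1 - s) ^ (-(1/2) : ℝ)
      = (2 / r^(n+1)) * ∫ t in c..r, (r^2 - t^2) ^ ((n:ℝ)/2) := by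
  have hx0 : (0:ℝ) ≤ 1 - c^2/r^2 := by
    have h1 : c^2 ≤ r^2 := by nlinarith
    have : c^2/r^2 ≤ 1 := by rw [div_le_one (by positivity)]; exact h1
    linarith
  rw [intervalIntegral.integral_of_le hx0, MeasureTheory.integral_Ioc_eq_integral_Ioo, ← himg]
  rw [MeasureTheory.integral_image_eq_integral_abs_deriv_smul measurableSet_Ioo
      (f' := fun t => -(2*t)/r^2) ?hderiv ?hinj]
  case hderiv =>
    intro t ht
    have : HasDerivAt (fun t : ℝ => 1 - t^2/r^2) (-(2*t)/r^2) t := by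
      have := ((hasDerivAt_pow 2 t).div_const (r^2)).const_sub 1
      simpa using this.congr_deriv (by ring)
    exact this.hasDerivWithinAt
  case hinj =>
    intro a ha b hb hab
    simp only [mem_Ioo] at ha hb
    have ha0 : 0 < a := lt_of_le_of_lt hc ha.1
    have hb0 : 0 < b := lt_of_le_of_lt hc hb.1
    field_simp at hab
    exact (sq_eq_sq₀ ha0.le hb0.le).mp (by linarith)
  rw [show ∫ t in c..r, (r^2 - t^2) ^ ((n:ℝ)/2) =
      ∫ t in Ioo c r, (r^2 - t^2) ^ ((n:ℝ)/2) by
    rw [intervalIntegral.integral_of_le hcr, MeasureTheory.integral_Ioc_eq_integral_Ioo],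
    ← MeasureTheory.integral_const_mul]
  apply MeasureTheory.setIntegral_congr_fun measurableSet_Ioo
  intro t ht
  simp only [mem_Ioo] at ht
  have ht0 : 0 < t := lt_of_le_of_lt hc ht.1
  have htr : 0 < r^2 - t^2 := by nlinarith [ht.2]
  have h1 : |(-(2*t)/r^2)| = 2*t/r^2 := by
    rw [abs_div, abs_neg, abs_of_nonneg (by positivity), abs_of_nonneg (by positivity)]
  dsimp only
  rw [smul_eq_mul, h1]
  have h2 : (1 : ℝ) - (1 - t^2/r^2) = t^2/r^2 := by ring
  rw [h2]
  have h3 : ((1:ℝ) - t^2/r^2) = (r^2 - t^2)/r^2 := by field_simp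
  have h4 : ((r^2 - t^2)/r^2 : ℝ) ^ ((n:ℝ)/2) = (r^2-t^2)^((n:ℝ)/2) / (r^2)^((n:ℝ)/2) := by
    rw [Real.div_rpow htr.le (by positivity)]
  have h5 : ((r:ℝ)^2)^((n:ℝ)/2) = r^n := by
    rw [← Real.rpow_natCast r 2, ← Real.rpow_mul hr.le,
      show ((2:ℕ):ℝ)*((n:ℝ)/2) = ((n:ℕ):ℝ) by push_cast; ring, Real.rpow_natCast]
  have h6 : ((t:ℝ)^2/r^2) ^ (-(1/2) : ℝ) = r / t := by
    have : ((t:ℝ)^2/r^2) = (t/r)^2 := by ring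
    rw [this, ← Real.rpow_two, ← Real.rpow_mul (by positivity)]
    norm_num
    rw [Real.rpow_neg_one, inv_div]
  rw [h3, h4, h5, h6]
  field_simp
  ring

private lemma slice_vol(n : ℕ) (a : ℝ) (ha : 0 ≤ a) :
    volume {z : Fin n → ℝ | ∑ j, z j ^ 2 ≤ a}
      = ENNReal.ofReal (a ^ ((n:ℝ)/2)) * ENNReal.ofReal (Real.sqrt π ^ n / Real.Gamma (n/2 + 1)) := by
  rcases Nat.eq_zero_or_pos n with hn | hn
  · subst hn
    have : {z : Fin 0 → ℝ | ∑ j, z j ^ 2 ≤ a} = univ := by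
      ext z; simp [ha]
    rw [this]
    simp [Real.Gamma_one, MeasureTheory.volume_pi, MeasureTheory.Measure.pi_univ]
  · have : Nonempty (Fin n) := ⟨⟨0, hn⟩⟩
    have hset : {z : Fin n → ℝ | ∑ j, z j ^ 2 ≤ a}
        = (WithLp.toLp 2 : (Fin n → ℝ) → EuclideanSpace ℝ (Fin n)) ⁻¹'
          (Metric.closedBall (0 : EuclideanSpace ℝ (Fin n)) (Real.sqrt a)) := by
      ext z
      simp only [mem_setOf_eq, mem_preimage, Metric.mem_closedBall, dist_zero_right]
      rw [EuclideanSpace.norm_eq]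
      simp_rw [Real.norm_eq_abs, sq_abs]
      exact (Real.sqrt_le_sqrt_iff ha).symm
    rw [hset, (PiLp.volume_preserving_toLp (Fin n)).measure_preimage
        measurableSet_closedBall.nullMeasurableSet,
      EuclideanSpace.volume_closedBall]
    congr 1
    · rw [← ENNReal.ofReal_pow (Real.sqrt_nonneg a), Fintype.card_fin]
      congr 1
      rw [← Real.rpow_natCast (Real.sqrt a) n, Real.sqrt_eq_rpow, ← Real.rpow_mul ha]
      congr 1
      ring
    · rw [Fintype.card_fin]

private lemma cap_vol(n : ℕ) (r h : ℝ) (hr : 0 < r) (hh0 : 0 ≤ h) (hhr : h ≤ r) :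
    (volume {x : EuclideanSpace ℝ (Fin (n+1)) | ‖x‖ ≤ r ∧ r - h ≤ x 0}).toReal
      = (∫ t in (r-h)..r, (r^2 - t^2) ^ ((n:ℝ)/2))
          * (Real.sqrt π ^ n / Real.Gamma ((n:ℝ)/2 + 1)) := by
  set C : ℝ := Real.sqrt π ^ n / Real.Gamma ((n:ℝ)/2 + 1) with hC
  have hC0 : 0 ≤ C := by
    apply div_nonneg (by positivity)
    have : 0 < Real.Gamma ((n:ℝ)/2 + 1) := Real.Gamma_pos_of_pos (by positivity)
    linarith
  have hmsum : Measurable (fun y : Fin (n+1) → ℝ => ∑ i, y i ^ 2) := by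
    apply Finset.measurable_sum
    intro i _
    exact (measurable_pi_apply i).pow_const 2
  have hmsum' : Measurable (fun p : ℝ × (Fin n → ℝ) => p.1^2 + ∑ j, p.2 j ^ 2) := by
    apply (measurable_fst.pow_const 2).add
    apply Finset.measurable_sum
    intro i _
    exact ((measurable_pi_apply i).comp measurable_snd).pow_const 2
  have hT : MeasurableSet {y : Fin (n+1) → ℝ | (∑ i, y i ^ 2 ≤ r^2) ∧ r - h ≤ y 0} := by
    rw [Set.setOf_and]
    exact (measurableSet_le hmsum measurable_const).inter
      (measurableSet_le measurable_const (measurable_pi_apply 0))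
  have key : ∀ x : EuclideanSpace ℝ (Fin (n+1)), (‖x‖ ≤ r ↔ ∑ i, x i ^ 2 ≤ r^2) := by
    intro x
    rw [EuclideanSpace.norm_eq]
    simp_rw [Real.norm_eq_abs, sq_abs]
    have := Real.sqrt_le_sqrt_iff (x := ∑ i, x i ^ 2) (y := r^2) (by positivity)
    rwa [Real.sqrt_sq hr.le] at this
  have hstep1 : volume {x : EuclideanSpace ℝ (Fin (n+1)) | ‖x‖ ≤ r ∧ r - h ≤ x 0}
      = volume {y : Fin (n+1) → ℝ | (∑ i, y i ^ 2 ≤ r^2) ∧ r - h ≤ y 0} := by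
    rw [← (EuclideanSpace.volume_preserving_symm_measurableEquiv_toLp (Fin (n+1))).measure_preimage
      hT.nullMeasurableSet]
    congr 1
    ext x
    simp only [mem_setOf_eq, mem_preimage]
    rw [key x]
    exact Iff.rfl
  have hU : MeasurableSet {p : ℝ × (Fin n → ℝ) | (p.1^2 + ∑ j, p.2 j ^ 2 ≤ r^2) ∧ r - h ≤ p.1} := by
    rw [Set.setOf_and]
    exact (measurableSet_le hmsum' measurable_const).inter
      (measurableSet_le measurable_const measurable_fst)
  have hstep2 : volume {y : Fin (n+1) → ℝ | (∑ i, y i ^ 2 ≤ r^2) ∧ r - h ≤ y 0}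
      = volume {p : ℝ × (Fin n → ℝ) | (p.1^2 + ∑ j, p.2 j ^ 2 ≤ r^2) ∧ r - h ≤ p.1} := by
    rw [← (volume_preserving_piFinSuccAbove (fun _ : Fin (n+1) => ℝ) 0).measure_preimage
      hU.nullMeasurableSet]
    congr 1
    ext y
    simp only [mem_setOf_eq, mem_preimage, MeasurableEquiv.piFinSuccAbove,
      MeasurableEquiv.coe_mk, Equiv.coe_fn_symm_mk]
    rw [Fin.sum_univ_succ]
    exact Iff.rfl
  rw [hstep1, hstep2]
  -- step 3 : Fubini
  rw [MeasureTheory.Measure.volume_eq_prod, MeasureTheory.Measure.prod_apply hU]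
  have hsec : ∀ t : ℝ, volume (Prod.mk t ⁻¹' {p : ℝ × (Fin n → ℝ) |
        (p.1^2 + ∑ j, p.2 j ^ 2 ≤ r^2) ∧ r - h ≤ p.1})
      = Set.indicator (Icc (r-h) r)
          (fun t => ENNReal.ofReal ((r^2 - t^2) ^ ((n:ℝ)/2) * C)) t := by
    intro t
    by_cases ht : t ∈ Icc (r-h) r
    · rw [Set.indicator_of_mem ht]
      obtain ⟨ht1, ht2⟩ := ht
      have hpre : Prod.mk t ⁻¹' {p : ℝ × (Fin n → ℝ) |
            (p.1^2 + ∑ j, p.2 j ^ 2 ≤ r^2) ∧ r - h ≤ p.1}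
          = {z : Fin n → ℝ | ∑ j, z j ^ 2 ≤ r^2 - t^2} := by
        ext z
        simp only [mem_preimage, mem_setOf_eq]
        constructor
        · rintro ⟨h1, _⟩; linarith
        · intro h1; exact ⟨by linarith, ht1⟩
      have ha : (0:ℝ) ≤ r^2 - t^2 := by nlinarith [lt_of_lt_of_le hr (le_refl r)]
      rw [hpre, slice_vol n _ ha, ← ENNReal.ofReal_mul (by positivity)]
    · rw [Set.indicator_of_notMem ht]
      have hpre : Prod.mk t ⁻¹' {p : ℝ × (Fin n → ℝ) |
            (p.1^2 + ∑ j, p.2 j ^ 2 ≤ r^2) ∧ r - h ≤ p.1} = ∅ := by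
        ext z
        simp only [mem_preimage, mem_setOf_eq, mem_empty_iff_false, iff_false]
        rintro ⟨h1, h2⟩
        rw [mem_Icc, not_and_or] at ht
        rcases ht with ht | ht
        · exact ht h2
        · push_neg at ht
          have : 0 ≤ ∑ j, z j ^ 2 := by positivity
          nlinarith
      rw [hpre, measure_empty]
  rw [lintegral_congr hsec, lintegral_indicator measurableSet_Icc]
  -- step 4 : lintegral to integral
  have hcont : ContinuousOn (fun t : ℝ => (r^2 - t^2) ^ ((n:ℝ)/2) * C) (Icc (r-h) r) := by
    apply ContinuousOn.mul ?_ continuousOn_const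
    apply ContinuousOn.rpow_const
    · exact (continuous_const.sub (continuous_pow 2)).continuousOn
    · intro t _
      right; positivity
  have hint : IntegrableOn (fun t : ℝ => (r^2 - t^2) ^ ((n:ℝ)/2) * C) (Icc (r-h) r) :=
    hcont.integrableOn_Icc
  rw [← MeasureTheory.ofReal_integral_eq_lintegral_ofReal hint ?_]
  · rw [ENNReal.toReal_ofReal ?_]
    · rw [MeasureTheory.integral_Icc_eq_integral_Ioc, ← intervalIntegral.integral_of_le (by linarith),
        intervalIntegral.integral_mul_const]
    · apply MeasureTheory.setIntegral_nonneg measurableSet_Icc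
      intro t ht
      have : (0:ℝ) ≤ r^2 - t^2 := by
        obtain ⟨ht1, ht2⟩ := ht; nlinarith
      positivity
  · filter_upwards [ae_restrict_mem measurableSet_Icc] with t ht
    obtain ⟨ht1, ht2⟩ := ht
    have : (0:ℝ) ≤ r^2 - t^2 := by nlinarith
    positivity

/-- Regularized incomplete beta function `I_x(a,b)`. -/
noncomputable def regIncBeta (x a b : ℝ) : ℝ :=
  (∫ s in (0:ℝ)..x, s ^ (a - 1) * (1 - s) ^ (b - 1)) /
    (Real.Gamma a * Real.Gamma b / Real.Gamma (a + b))

/-- Volume of a spherical cap of height `h` of the ball of radius `r` in `ℝ^d`: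
`(1/2) · V_d · r^d · I_{(2rh-h²)/r²}((d+1)/2, 1/2)`, where
`V_d = π^{d/2}/Γ(d/2+1)`. -/
theorem volume_spherical_cap
    (d : ℕ) (hd : 1 ≤ d) (r h : ℝ) (hr : 0 < r) (hh0 : 0 ≤ h) (hhr : h ≤ r) :
    (volume {x : EuclideanSpace ℝ (Fin d) | ‖x‖ ≤ r ∧ r - h ≤ x ⟨0, hd⟩}).toReal =
      (1 / 2) * (π ^ ((d : ℝ) / 2) / Real.Gamma ((d : ℝ) / 2 + 1)) * r ^ (d : ℕ) *
        regIncBeta ((2 * r * h - h ^ 2) / r ^ 2) (((d : ℝ) + 1) / 2) (1 / 2) := by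
  obtain ⟨n, rfl⟩ : ∃ n, d = n + 1 := ⟨d - 1, (Nat.succ_pred_eq_of_pos hd).symm⟩
  have hidx : (⟨0, hd⟩ : Fin (n+1)) = 0 := rfl
  rw [hidx, cap_vol n r h hr hh0 hhr]
  have hc : (0:ℝ) ≤ r - h := by linarith
  have hcr : r - h ≤ r := by linarith
  have hsub := subst_lemma n r (r-h) hr hc hcr (img_lemma r (r-h) hr hc hcr)
  set J : ℝ := ∫ s in (0:ℝ)..(1 - (r-h)^2/r^2), s ^ ((n:ℝ)/2) * (1 - s) ^ (-(1/2) : ℝ) with hJ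
  have hrn : (0:ℝ) < r^(n+1) := by positivity
  have hK : (∫ t in (r-h)..r, (r^2 - t^2) ^ ((n:ℝ)/2)) = r^(n+1)/2 * J := by
    rw [hsub]; field_simp
  rw [hK]
  have hx : (2*r*h - h^2)/r^2 = 1 - (r-h)^2/r^2 := by field_simp; ring
  have hInt : (∫ s in (0:ℝ)..((2*r*h - h^2)/r^2),
      s ^ ((((n:ℕ)+1:ℝ)+1)/2 - 1) * (1-s)^((1:ℝ)/2 - 1)) = J := by
    rw [hx, hJ,
      show ((((n:ℕ):ℝ)+1)+1)/2 - 1 = (n:ℝ)/2 by push_cast; ring,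
      show (1:ℝ)/2 - 1 = -(1/2) by norm_num]
  rw [regIncBeta]
  push_cast
  rw [hInt]
  -- constants
  have hG1 : Real.Gamma (((n:ℝ)+1+1)/2) = Real.Gamma ((n:ℝ)/2 + 1) := by
    congr 1; ring
  have hG2 : Real.Gamma (((n:ℝ)+1+1)/2 + 1/2) = Real.Gamma (((n:ℝ)+1)/2 + 1) := by
    congr 1; ring
  rw [hG1, hG2, Real.Gamma_one_half_eq]
  have hGpos : 0 < Real.Gamma ((n:ℝ)/2 + 1) := Real.Gamma_pos_of_pos (by positivity)
  have hGpos2 : 0 < Real.Gamma (((n:ℝ)+1)/2 + 1) := Real.Gamma_pos_of_pos (by positivity)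
  have hpi : (√π : ℝ) ^ (n+1) = π ^ (((n:ℝ)+1)/2) := by
    rw [Real.sqrt_eq_rpow, ← Real.rpow_natCast (π ^ ((1:ℝ)/2)) (n+1),
      ← Real.rpow_mul Real.pi_pos.le]
    congr 1
    push_cast; ring
  have hsq : (0:ℝ) < √π := Real.sqrt_pos.mpr Real.pi_pos
  rw [show ((n:ℝ)+1)/2 = (((n:ℕ):ℝ)+1)/2 by norm_num] at hpi
  field_simp
  rw [← hpi, pow_succ]
  ring
end

section
/- Let f : ℝ^d → ℝ be convex with f(0) = 0 and ∇f(0) = 0, and suppose ∇f is L-Lipschitz. Let π ∝ exp(-f) and m = ∫ ‖x‖ dπ(x). Then the Gaussian μ₀ = N(0, L^{-1}·I_d) satisfies R_∞(μ₀ ‖ π) ≤ 2 + (d/2)·ln(m²·L), where R_∞(μ‖π) = ln ‖dμ/dπ‖_{L^∞(π)} is the infinite Rényi divergence. -/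
set_option maxHeartbeats 1000000

open MeasureTheory Real Set

section Aux

lemma sum_range_succ_real (n : ℕ) : ∑ i ∈ Finset.range n, ((i:ℝ)+1) = n*(n+1)/2 := by
  induction n with
  | zero => simp
  | succ k ih => rw [Finset.sum_range_succ, ih]; push_cast; ring

lemma exp_sq_ge : (7.29:ℝ) ≤ Real.exp 1 ^ 2 := by
  nlinarith [Real.exp_one_gt_d9.le]

lemma sqrt_pi_ge : (1.77:ℝ) ≤ Real.sqrt π := by
  rw [show (1.77:ℝ) = Real.sqrt (1.77^2) by rw [Real.sqrt_sq]; norm_num]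
  exact Real.sqrt_le_sqrt (by nlinarith [Real.pi_gt_d6])

lemma sqrt_two_le : Real.sqrt 2 ≤ 1.42 := by
  rw [show (1.42:ℝ) = Real.sqrt (1.42^2) by rw [Real.sqrt_sq]; norm_num]
  exact Real.sqrt_le_sqrt (by norm_num)

lemma gamma_bd : ∀ d : ℕ, 2 * (2:ℝ)^((d:ℝ)/2) ≤ Real.exp 1 ^ 2 * Real.Gamma ((d:ℝ)/2 + 1) := by
  intro d
  induction d using Nat.strong_induction_on with
  | _ d ih =>
    match d with
    | 0 =>
        rw [show ((0:ℕ):ℝ)/2 = 0 by norm_num, Real.rpow_zero, zero_add, Real.Gamma_one]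
        nlinarith [exp_sq_ge]
    | 1 =>
        have h1 : ((1:ℕ):ℝ)/2 + 1 = (1/2 : ℝ) + 1 := by norm_num
        rw [h1, Real.Gamma_add_one (by norm_num), Real.Gamma_one_half_eq]
        have h2 : (2:ℝ) ^ (((1:ℕ):ℝ)/2) = Real.sqrt 2 := by
          rw [Real.sqrt_eq_rpow]; norm_num
        rw [h2]
        nlinarith [exp_sq_ge, sqrt_pi_ge, sqrt_two_le, Real.sqrt_nonneg (2:ℝ)]
    | 2 =>
        have h1 : ((2:ℕ):ℝ)/2 + 1 = (1:ℝ) + 1 := by norm_num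
        rw [h1, Real.Gamma_add_one (by norm_num), Real.Gamma_one]
        have h2 : (2:ℝ) ^ (((2:ℕ):ℝ)/2) = 2 := by norm_num
        rw [h2]; nlinarith [exp_sq_ge]
    | 3 =>
        have h1 : ((3:ℕ):ℝ)/2 + 1 = (1/2 + 1 : ℝ) + 1 := by norm_num
        rw [h1, Real.Gamma_add_one (by norm_num), Real.Gamma_add_one (by norm_num),
          Real.Gamma_one_half_eq]
        have h2 : (2:ℝ) ^ (((3:ℕ):ℝ)/2) = 2 * Real.sqrt 2 := by
          rw [show ((3:ℕ):ℝ)/2 = 1 + (1/2:ℝ) by norm_num, Real.rpow_add (by norm_num),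
            Real.rpow_one, Real.sqrt_eq_rpow]
        rw [h2]
        nlinarith [exp_sq_ge, sqrt_pi_ge, sqrt_two_le, Real.sqrt_nonneg (2:ℝ)]
    | (n+4) =>
        have ihn := ih (n+2) (by omega)
        have hy : ((n:ℝ)+2)/2 + 1 ≠ 0 := by positivity
        have h1 : ((n+4:ℕ):ℝ)/2 + 1 = (((n:ℝ)+2)/2 + 1) + 1 := by push_cast; ring
        have h2 : ((n+2:ℕ):ℝ)/2 + 1 = ((n:ℝ)+2)/2 + 1 := by push_cast; ring
        rw [h1, Real.Gamma_add_one hy]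
        rw [h2] at ihn
        have h3 : (2:ℝ) ^ (((n+4:ℕ):ℝ)/2) = 2 * (2:ℝ) ^ (((n+2:ℕ):ℝ)/2) := by
          rw [show ((n+4:ℕ):ℝ)/2 = 1 + ((n+2:ℕ):ℝ)/2 by push_cast; ring,
            Real.rpow_add (by norm_num), Real.rpow_one]
        have hG : 0 < Real.Gamma (((n:ℝ)+2)/2 + 1) := Real.Gamma_pos_of_pos (by positivity)
        have hfac : (2:ℝ) ≤ ((n:ℝ)+2)/2 + 1 := by
          have : (0:ℝ) ≤ n := Nat.cast_nonneg n
          linarith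
        rw [h3]
        calc 2 * (2 * (2:ℝ) ^ (((n+2:ℕ):ℝ)/2)) ≤ 2 * (Real.exp 1 ^2 * Real.Gamma (((n:ℝ)+2)/2+1)) := by
              nlinarith
          _ = (Real.exp 1 ^2 * Real.Gamma (((n:ℝ)+2)/2+1)) * 2 := by ring
          _ ≤ (Real.exp 1 ^2 * Real.Gamma (((n:ℝ)+2)/2+1)) * ((((n:ℝ)+2)/2 + 1)) := by
              exact mul_le_mul_of_nonneg_left hfac (by positivity)
          _ = Real.exp 1 ^ 2 * ((((n:ℝ)+2)/2 + 1) * Real.Gamma (((n:ℝ)+2)/2 + 1)) := by ring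

variable {d : ℕ}
local notation "E" => EuclideanSpace ℝ (Fin d)

lemma subgrad_at {f : E → ℝ} (hconv : ConvexOn ℝ univ f) {x : E}
    (hd : DifferentiableAt ℝ f x) (y : E) :
    f x + (inner ℝ (gradient f x) (y - x) : ℝ) ≤ f y := by
  set φ : ℝ → ℝ := fun t => f (t • (y - x) + x) with hφ
  have hφconv : ConvexOn ℝ univ φ := by
    have h := hconv.comp_affineMap (AffineMap.lineMap x y : ℝ →ᵃ[ℝ] E)
    have : (f ∘ (AffineMap.lineMap x y : ℝ →ᵃ[ℝ] E)) = φ := by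
      funext t; simp [hφ, AffineMap.lineMap_apply]
    rw [this] at h
    simpa using h
  have hcurve : HasDerivAt (fun t : ℝ => t • (y - x) + x) (y - x) 0 := by
    simpa using ((hasDerivAt_id (0:ℝ)).smul_const (y - x)).add_const x
  have hD : HasDerivAt φ (fderiv ℝ f x (y - x)) 0 := by
    have h0 : (0:ℝ) • (y - x) + x = x := by simp
    have h := hd.hasFDerivAt
    rw [← h0] at h
    have := h.comp_hasDerivAt 0 hcurve
    rw [h0] at this
    exact this
  have hT := hasDerivAt_iff_tendsto_slope.1 hD
  have hle : fderiv ℝ f x (y - x) ≤ φ 1 - φ 0 := by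
    refine le_of_tendsto hT ?_
    have hev : ∀ᶠ t in nhdsWithin (0:ℝ) {(0:ℝ)}ᶜ, t ≤ 1 ∧ t ≠ 0 := by
      filter_upwards [eventually_nhdsWithin_of_eventually_nhds
        (eventually_le_nhds (zero_lt_one)), self_mem_nhdsWithin] with t h1 h2
      exact ⟨h1, h2⟩
    filter_upwards [hev] with t ⟨ht1, ht0⟩
    have := hφconv.secant_mono (a := 0) (x := t) (y := 1) trivial trivial trivial ht0
      one_ne_zero ht1
    simpa [slope_def_field] using this
  have hφ0 : φ 0 = f x := by simp [hφ]
  have hφ1 : φ 1 = f y := by simp [hφ]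
  have hinner : (inner ℝ (gradient f x) (y - x) : ℝ) = fderiv ℝ f x (y - x) := by
    simp [gradient, InnerProductSpace.toDual_symm_apply]
  rw [hφ0, hφ1] at hle
  linarith [hle, hinner ▸ hle]

lemma dense_diff {f : E → ℝ} (hconv : ConvexOn ℝ univ f) :
    Dense {z : E | DifferentiableAt ℝ f z} := by
  have hll : LocallyLipschitz f := hconv.locallyLipschitz
  rw [dense_iff_inter_open]
  rintro U hU ⟨u, hu⟩
  obtain ⟨K, t, ht, hK⟩ := hll u
  obtain ⟨ε, hε, hball⟩ := Metric.mem_nhds_iff.1 (Filter.inter_mem ht (hU.mem_nhds hu))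
  have hK' : LipschitzOnWith K f (Metric.ball u ε) :=
    hK.mono (hball.trans inter_subset_left)
  have hae := hK'.ae_differentiableWithinAt (μ := volume) measurableSet_ball
  have hne : (ae (volume.restrict (Metric.ball u ε))).NeBot :=
    ae_restrict_neBot.2 (Metric.measure_ball_pos volume u hε).ne'
  obtain ⟨z, hz1, hz2⟩ := (hae.and (ae_restrict_mem measurableSet_ball)).exists
  exact ⟨z, (hball hz2).2, hz1.differentiableAt (Metric.isOpen_ball.mem_nhds hz2)⟩

lemma subgrad_all {f : E → ℝ} {L : ℝ} (hL : 0 < L) (hconv : ConvexOn ℝ univ f)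
    (hlip : ∀ x y, ‖gradient f x - gradient f y‖ ≤ L * ‖x - y‖) :
    ∀ x y, f x + (inner ℝ (gradient f x) (y - x) : ℝ) ≤ f y := by
  have hcont : Continuous f := continuousOn_univ.1 (hconv.continuousOn isOpen_univ)
  have hGcont : Continuous (fun z : E => gradient f z) := by
    refine (LipschitzWith.of_dist_le_mul (K := Real.toNNReal L) fun a b => ?_).continuous
    simpa [dist_eq_norm, Real.coe_toNNReal L hL.le] using hlip a b
  intro x y
  have hclosed : IsClosed {z : E | f z + (inner ℝ (gradient f z) (y - z) : ℝ) ≤ f y} :=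
    isClosed_le (hcont.add (hGcont.inner (continuous_const.sub continuous_id))) continuous_const
  have hsub : {z : E | DifferentiableAt ℝ f z} ⊆
      {z : E | f z + (inner ℝ (gradient f z) (y - z) : ℝ) ≤ f y} :=
    fun z hz => subgrad_at hconv hz y
  have hx : x ∈ closure {z : E | DifferentiableAt ℝ f z} := (dense_diff hconv) x
  exact hclosed.closure_subset ((closure_mono hsub) hx)

lemma f_le_quad {f : E → ℝ} {L : ℝ} (hL : 0 < L) (hf0 : f 0 = 0)
    (hgrad0 : gradient f 0 = 0)
    (hlip : ∀ x y, ‖gradient f x - gradient f y‖ ≤ L * ‖x - y‖)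
    (hsub : ∀ x y, f x + (inner ℝ (gradient f x) (y - x) : ℝ) ≤ f y) (x : E) :
    f x ≤ L * ‖x‖^2 / 2 := by
  have hGnorm : ∀ z : E, ‖gradient f z‖ ≤ L * ‖z‖ := by
    intro z; simpa [hgrad0] using hlip z 0
  have key : ∀ n : ℕ, 0 < n → f x ≤ L * ‖x‖^2 * ((n:ℝ)+1) / (2*n) := by
    intro n hn
    have hn0 : (n:ℝ) ≠ 0 := Nat.cast_ne_zero.2 hn.ne'
    set g : ℕ → ℝ := fun i => f (((i:ℝ)/(n:ℝ)) • x) with hg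
    have htel : f x = ∑ i ∈ Finset.range n, (g (i+1) - g i) := by
      rw [Finset.sum_range_sub g n]
      simp [hg, hf0, div_self hn0]
    have hstep : ∀ i ∈ Finset.range n,
        g (i+1) - g i ≤ L * ‖x‖^2 * ((i:ℝ)+1) / (n:ℝ)^2 := by
      intro i _
      set a : E := ((((i:ℕ):ℝ)+1)/(n:ℝ)) • x with ha
      set b : E := (((i:ℕ):ℝ)/(n:ℝ)) • x with hb
      have hsub' := hsub a b
      have hba : b - a = (-(1/(n:ℝ))) • x := by
        rw [ha, hb, ← sub_smul]; congr 1; field_simp; ring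
      have hinner : (inner ℝ (gradient f a) (b - a) : ℝ)
          = -(1/(n:ℝ)) * (inner ℝ (gradient f a) x : ℝ) := by
        rw [hba, real_inner_smul_right]
      have hinner2 : (inner ℝ (gradient f a) x : ℝ) ≤ L * ((((i:ℕ):ℝ)+1)/(n:ℝ)) * ‖x‖^2 := by
        calc (inner ℝ (gradient f a) x : ℝ) ≤ ‖gradient f a‖ * ‖x‖ := real_inner_le_norm _ _
          _ ≤ (L * ‖a‖) * ‖x‖ := by
              exact mul_le_mul_of_nonneg_right (hGnorm a) (norm_nonneg x)
          _ = L * ((((i:ℕ):ℝ)+1)/(n:ℝ)) * ‖x‖^2 := by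
              rw [ha, norm_smul]
              rw [Real.norm_eq_abs, abs_of_nonneg (by positivity)]
              ring
      have hfab : g (i+1) - g i ≤ (1/(n:ℝ)) * (inner ℝ (gradient f a) x : ℝ) := by
        have : f a + (inner ℝ (gradient f a) (b - a) : ℝ) ≤ f b := hsub'
        have hgi : g (i+1) = f a := by rw [hg, ha]; push_cast; ring_nf
        have hgi2 : g i = f b := by rw [hg, hb]
        rw [hgi, hgi2]
        rw [hinner] at this
        linarith
      calc g (i+1) - g i ≤ (1/(n:ℝ)) * (inner ℝ (gradient f a) x : ℝ) := hfab
        _ ≤ (1/(n:ℝ)) * (L * ((((i:ℕ):ℝ)+1)/(n:ℝ)) * ‖x‖^2) := by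
            apply mul_le_mul_of_nonneg_left hinner2 (by positivity)
        _ = L * ‖x‖^2 * ((i:ℝ)+1) / (n:ℝ)^2 := by field_simp
    calc f x = ∑ i ∈ Finset.range n, (g (i+1) - g i) := htel
      _ ≤ ∑ i ∈ Finset.range n, L * ‖x‖^2 * ((i:ℝ)+1) / (n:ℝ)^2 :=
          Finset.sum_le_sum hstep
      _ = L * ‖x‖^2 / (n:ℝ)^2 * ∑ i ∈ Finset.range n, ((i:ℝ)+1) := by
          rw [Finset.mul_sum]; congr 1; funext i; ring
      _ = L * ‖x‖^2 * ((n:ℝ)+1) / (2*n) := by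
          rw [sum_range_succ_real]; field_simp
  have hlim : Filter.Tendsto (fun n : ℕ => L * ‖x‖^2 * ((n:ℝ)+1) / (2*n))
      Filter.atTop (nhds (L * ‖x‖^2 / 2)) := by
    have h1 : (fun n : ℕ => L * ‖x‖^2 * ((n:ℝ)+1) / (2*n))
        =ᶠ[Filter.atTop] (fun n : ℕ => L * ‖x‖^2 / 2 + (L * ‖x‖^2 / 2) * (1/(n:ℝ))) := by
      filter_upwards [Filter.eventually_gt_atTop 0] with n hn
      have hn0 : (n:ℝ) ≠ 0 := Nat.cast_ne_zero.2 hn.ne'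
      field_simp
    rw [Filter.tendsto_congr' h1]
    have := tendsto_one_div_atTop_nhds_zero_nat.const_mul (L * ‖x‖^2 / 2)
    simpa using (tendsto_const_nhds.add this)
  refine ge_of_tendsto hlim ?_
  filter_upwards [Filter.eventually_gt_atTop 0] with n hn using key n hn

lemma sublevel_bdd {f : E → ℝ} (hconv : ConvexOn ℝ univ f) (hcont : Continuous f)
    (hf0 : f 0 = 0) (hint : Integrable (fun x : E => Real.exp (-f x))) :
    ∃ R : ℝ, 0 < R ∧ ∀ x : E, R ≤ ‖x‖ → 1 ≤ f x := by
  by_contra hcon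
  push_neg at hcon
  have hseq : ∀ n : ℕ, ∃ x : E, ((n:ℝ)+1) ≤ ‖x‖ ∧ f x < 1 := by
    intro n
    obtain ⟨x, hx1, hx2⟩ := hcon ((n:ℝ)+1) (by positivity)
    exact ⟨x, hx1, hx2⟩
  choose xs hxs1 hxs2 using hseq
  have hxsn : ∀ n, xs n ≠ 0 := by
    intro n h
    have := hxs1 n
    rw [h, norm_zero] at this
    have : (0:ℝ) < (n:ℝ)+1 := by positivity
    linarith
  set u : ℕ → E := fun n => ‖xs n‖⁻¹ • xs n with hu
  have hun : ∀ n, u n ∈ Metric.sphere (0:E) 1 := by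
    intro n
    rw [mem_sphere_zero_iff_norm, hu, norm_smul, norm_inv, norm_norm,
      inv_mul_cancel₀ (norm_ne_zero_iff.2 (hxsn n))]
  obtain ⟨v, hv, φ, hφ, hconv_u⟩ := (isCompact_sphere (0:E) 1).tendsto_subseq hun
  have hvnorm : ‖v‖ = 1 := mem_sphere_zero_iff_norm.1 hv
  -- f ≤ 1 on the ray through v
  have hray : ∀ t : ℝ, 0 ≤ t → f (t • v) ≤ 1 := by
    intro t ht
    have hev : ∀ᶠ n in Filter.atTop, f (t • u (φ n)) ≤ 1 := by
      filter_upwards [Filter.eventually_ge_atTop ⌈t⌉₊] with n hn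
      have hnormn : t ≤ ‖xs (φ n)‖ := by
        have h1 : (φ n : ℝ) + 1 ≤ ‖xs (φ n)‖ := hxs1 (φ n)
        have h2 : (n:ℝ) ≤ (φ n : ℝ) := by exact_mod_cast hφ.le_apply
        have h3 : t ≤ ((⌈t⌉₊ : ℕ) : ℝ) := Nat.le_ceil t
        have h4 : ((⌈t⌉₊ : ℕ) : ℝ) ≤ (n:ℝ) := by exact_mod_cast hn
        linarith
      set s : ℝ := t / ‖xs (φ n)‖ with hs
      have hxpos : 0 < ‖xs (φ n)‖ := norm_pos_iff.2 (hxsn (φ n))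
      have hs0 : 0 ≤ s := div_nonneg ht hxpos.le
      have hs1 : s ≤ 1 := div_le_one_of_le₀ hnormn hxpos.le
      have heq : t • u (φ n) = s • xs (φ n) := by
        rw [hu, smul_smul, hs, div_eq_mul_inv]
      have hcvx := hconv.2 (mem_univ (xs (φ n))) (mem_univ (0:E)) hs0
        (by linarith : (0:ℝ) ≤ 1 - s) (by ring)
      rw [smul_zero, add_zero, hf0] at hcvx
      rw [heq]
      have hfx := hxs2 (φ n)
      calc f (s • xs (φ n)) ≤ s * f (xs (φ n)) + (1 - s) * 0 := hcvx
        _ = s * f (xs (φ n)) := by ring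
        _ ≤ 1 := by nlinarith
    have htend : Filter.Tendsto (fun n => f (t • u (φ n))) Filter.atTop (nhds (f (t • v))) :=
      (hcont.tendsto (t • v)).comp (hconv_u.const_smul t)
    exact le_of_tendsto htend hev
  -- small ball near 0 where f < 1
  obtain ⟨δ, hδpos, hδ⟩ : ∃ δ : ℝ, 0 < δ ∧ ∀ z : E, dist z 0 < δ → f z < 1 := by
    have hca : ContinuousAt f 0 := hcont.continuousAt
    rw [Metric.continuousAt_iff] at hca
    obtain ⟨δ, hδpos, hδ⟩ := hca 1 zero_lt_one
    refine ⟨δ, hδpos, fun z hz => ?_⟩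
    have := hδ hz
    rw [Real.dist_eq, hf0, sub_zero] at this
    exact lt_of_le_of_lt (le_abs_self _) this
  -- f ≤ 1 on balls along the ray
  set c : ℕ → E := fun k => (2*δ*((k:ℝ)+1)) • v with hc
  have hball1 : ∀ k : ℕ, ∀ w : E, w ∈ Metric.ball (c k) (δ/2) → f w ≤ 1 := by
    intro k w hw
    rw [Metric.mem_ball] at hw
    set z : E := (2:ℝ) • w - (4*δ*((k:ℝ)+1)) • v with hz
    have hzn : ‖z‖ < δ := by
      have hzeq : z = (2:ℝ) • (w - c k) := by
        rw [hz, hc, smul_sub, smul_smul]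
        norm_num
        module
      rw [hzeq, norm_smul]
      rw [show ‖(2:ℝ)‖ = 2 by simp]
      have : ‖w - c k‖ < δ/2 := by rwa [← dist_eq_norm]
      linarith
    have hweq : w = (1/2 : ℝ) • ((4*δ*((k:ℝ)+1)) • v) + (1/2 : ℝ) • z := by
      rw [hz]; module
    have hcvx := hconv.2 (mem_univ ((4*δ*((k:ℝ)+1)) • v)) (mem_univ z)
      (by norm_num : (0:ℝ) ≤ 1/2) (by norm_num : (0:ℝ) ≤ 1/2) (by norm_num)
    rw [← hweq] at hcvx
    simp only [smul_eq_mul] at hcvx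
    have h1 : f ((4*δ*((k:ℝ)+1)) • v) ≤ 1 := hray _ (by positivity)
    have h2 : f z < 1 := hδ z (by rwa [dist_zero_right])
    linarith
  -- disjointness
  have hdisj : Pairwise (Function.onFun Disjoint (fun k : ℕ => Metric.ball (c k) (δ/2))) := by
    intro k j hkj
    apply Metric.ball_disjoint_ball
    rw [hc, dist_eq_norm, ← sub_smul, norm_smul, hvnorm, mul_one, Real.norm_eq_abs]
    have : (2*δ*((k:ℝ)+1)) - (2*δ*((j:ℝ)+1)) = 2*δ*((k:ℝ) - (j:ℝ)) := by ring
    rw [this, abs_mul, abs_of_nonneg (by positivity : (0:ℝ) ≤ 2*δ)]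
    have h1 : (1:ℝ) ≤ |(k:ℝ) - (j:ℝ)| := by
      have hkj' : (k:ℤ) ≠ (j:ℤ) := by exact_mod_cast hkj
      have h : (1:ℤ) ≤ |(k:ℤ) - (j:ℤ)| := Int.one_le_abs (sub_ne_zero.2 hkj')
      calc (1:ℝ) = ((1:ℤ):ℝ) := by norm_num
        _ ≤ ((|(k:ℤ) - (j:ℤ)|:ℤ):ℝ) := by exact_mod_cast h
        _ = |(k:ℝ) - (j:ℝ)| := by rw [Int.cast_abs]; push_cast; ring_nf
    nlinarith
  -- infinite mass
  have hfin := hint.hasFiniteIntegral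
  rw [HasFiniteIntegral] at hfin
  have hmeasf : Measurable (fun a : E => (‖Real.exp (-f a)‖₊ : ENNReal)) :=
    (Real.continuous_exp.comp hcont.neg).measurable.nnnorm.coe_nnreal_ennreal
  have htop : (⊤ : ENNReal) ≤ ∫⁻ a : E, (‖Real.exp (-f a)‖₊ : ENNReal) := by
    have hstep1 : ∫⁻ a in ⋃ k : ℕ, Metric.ball (c k) (δ/2),
        (‖Real.exp (-f a)‖₊ : ENNReal) ≤ ∫⁻ a : E, (‖Real.exp (-f a)‖₊ : ENNReal) :=
      setLIntegral_le_lintegral _ _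
    rw [lintegral_iUnion (fun k => measurableSet_ball) hdisj] at hstep1
    refine le_trans ?_ hstep1
    have hconst : ∀ k : ℕ, ENNReal.ofReal (Real.exp (-1)) * volume (Metric.ball (0:E) (δ/2))
        ≤ ∫⁻ a in Metric.ball (c k) (δ/2), (‖Real.exp (-f a)‖₊ : ENNReal) := by
      intro k
      have hvol : volume (Metric.ball (c k) (δ/2)) = volume (Metric.ball (0:E) (δ/2)) :=
        Measure.addHaar_ball_center volume (c k) (δ/2)
      calc ENNReal.ofReal (Real.exp (-1)) * volume (Metric.ball (0:E) (δ/2))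
          = ∫⁻ _ in Metric.ball (c k) (δ/2), ENNReal.ofReal (Real.exp (-1)) := by
            rw [setLIntegral_const, hvol]
        _ ≤ ∫⁻ a in Metric.ball (c k) (δ/2), (‖Real.exp (-f a)‖₊ : ENNReal) := by
            refine setLIntegral_mono hmeasf ?_
            intro a ha
            have hfa : f a ≤ 1 := hball1 k a ha
            have hle : Real.exp (-1) ≤ Real.exp (-f a) := Real.exp_le_exp.2 (by linarith)
            rw [show ((‖Real.exp (-f a)‖₊ : ENNReal)) = ENNReal.ofReal (Real.exp (-f a)) from Real.enorm_eq_ofReal (Real.exp_pos (-f a)).le]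
            exact ENNReal.ofReal_le_ofReal hle
    calc (⊤:ENNReal) = ∑' _ : ℕ, ENNReal.ofReal (Real.exp (-1)) * volume (Metric.ball (0:E) (δ/2)) := by
          rw [ENNReal.tsum_const_eq_top_of_ne_zero]
          apply mul_ne_zero
          · simp [Real.exp_pos]
          · exact (Metric.measure_ball_pos volume 0 (by positivity)).ne'
      _ ≤ ∑' k : ℕ, ∫⁻ a in Metric.ball (c k) (δ/2), (‖Real.exp (-f a)‖₊ : ENNReal) :=
          ENNReal.tsum_le_tsum hconst
  exact absurd (lt_of_le_of_lt htop hfin) (lt_irrefl ⊤)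

lemma f_lin_lb {f : E → ℝ} {R : ℝ} (hconv : ConvexOn ℝ univ f) (hf0 : f 0 = 0)
    (hfnn : ∀ x : E, 0 ≤ f x) (hRpos : 0 < R) (hR : ∀ x : E, R ≤ ‖x‖ → 1 ≤ f x) :
    ∀ x : E, ‖x‖/R - 1 ≤ f x := by
  intro x
  rcases le_or_gt ‖x‖ R with h | h
  · have : ‖x‖/R ≤ 1 := div_le_one_of_le₀ h hRpos.le
    linarith [hfnn x]
  · have hxpos : 0 < ‖x‖ := lt_trans hRpos h
    set s : ℝ := R / ‖x‖ with hs
    have hs0 : 0 ≤ s := by positivity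
    have hs1 : s ≤ 1 := by
      rw [hs, div_le_one hxpos]; exact h.le
    have hcvx := hconv.2 (mem_univ x) (mem_univ (0:E)) hs0
      (by linarith : (0:ℝ) ≤ 1 - s) (by ring)
    simp only [smul_zero, add_zero, hf0, smul_eq_mul, mul_zero] at hcvx
    have hnorm : ‖s • x‖ = R := by
      rw [norm_smul, Real.norm_eq_abs, abs_of_nonneg hs0, hs]
      field_simp
    have h1 : 1 ≤ f (s • x) := hR _ hnorm.ge
    have h2 : f (s • x) ≤ s * f x := by linarith
    have h3 : 1 ≤ (R/‖x‖) * f x := by rw [← hs]; linarith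
    rw [div_sub_one hRpos.ne', div_le_iff₀ hRpos]
    have h4 := mul_le_mul_of_nonneg_left h3 hxpos.le
    rw [mul_one] at h4
    calc ‖x‖ - R ≤ ‖x‖ * ((R/‖x‖) * f x) - R := by linarith
      _ = R * f x - R := by field_simp
      _ ≤ f x * R := by nlinarith [hfnn x]

lemma integ_norm_exp {f : E → ℝ} {R : ℝ} (hcont : Continuous f) (hRpos : 0 < R)
    (hlb : ∀ x : E, ‖x‖/R - 1 ≤ f x) :
    Integrable (fun x : E => ‖x‖ * Real.exp (-f x)) := by
  set C : ℝ := (2:ℝ)^(d+2) * (1 + ((d+2).factorial : ℝ) * R^(d+2)) with hC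
  have hCpos : 0 < C := by positivity
  set K : ℝ := Real.exp 1 * C with hK
  have hfin : ((Module.finrank ℝ (EuclideanSpace ℝ (Fin d)) : ℝ)) < (d:ℝ) + 1 := by
    rw [finrank_euclideanSpace_fin]; linarith
  refine ((integrable_one_add_norm (μ := (volume : Measure (EuclideanSpace ℝ (Fin d))))
    hfin).const_mul K).mono' ?_ (Filter.Eventually.of_forall fun x => ?_)
  · exact (continuous_norm.mul (Real.continuous_exp.comp hcont.neg)).aestronglyMeasurable
  · set s : ℝ := ‖x‖ with hs
    have hs0 : 0 ≤ s := norm_nonneg x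
    have h1s : (0:ℝ) < 1 + s := by linarith
    have hpow_pos : (0:ℝ) < (1+s)^(d+1) := by positivity
    have hrpow : (1 + s) ^ (-((d:ℝ) + 1)) = ((1+s)^(d+1))⁻¹ := by
      rw [show -((d:ℝ)+1) = -(((d+1:ℕ)):ℝ) by push_cast; ring,
        Real.rpow_neg h1s.le, Real.rpow_natCast]
    have hexp : Real.exp (-f x) ≤ Real.exp 1 * Real.exp (-(s/R)) := by
      rw [← Real.exp_add]
      apply Real.exp_le_exp.2
      have := hlb x
      rw [← hs] at this
      linarith
    have hcore : s * (1+s)^(d+1) ≤ C * Real.exp (s/R) := by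
      have hp1 : s * (1+s)^(d+1) ≤ (1+s)^(d+2) := by
        have h' : (1+s)^(d+2) = (1+s) * (1+s)^(d+1) := by ring
        rw [h']
        apply mul_le_mul_of_nonneg_right (by linarith) (by positivity)
      have hp2 : (1+s)^(d+2) ≤ (2:ℝ)^(d+2) * (1 + s^(d+2)) := by
        rcases le_total s 1 with hc | hc
        · have h' : (1+s)^(d+2) ≤ (2:ℝ)^(d+2) :=
            pow_le_pow_left₀ (by linarith) (by linarith) _
          nlinarith [pow_nonneg hs0 (d+2), pow_pos (show (0:ℝ) < 2 by norm_num) (d+2)]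
        · have h' : (1+s)^(d+2) ≤ ((2:ℝ)*s)^(d+2) :=
            pow_le_pow_left₀ (by linarith) (by linarith) _
          rw [mul_pow] at h'
          nlinarith [pow_pos (show (0:ℝ) < 2 by norm_num) (d+2), pow_nonneg hs0 (d+2)]
      have hp3 : s^(d+2) ≤ ((d+2).factorial : ℝ) * R^(d+2) * Real.exp (s/R) := by
        have h2 := Real.pow_div_factorial_le_exp (x := s/R) (by positivity) (d+2)
        rw [div_le_iff₀ (by positivity : (0:ℝ) < (((d+2).factorial) : ℝ))] at h2
        calc s^(d+2) = (s/R)^(d+2) * R^(d+2) := by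
              rw [div_pow]; field_simp
          _ ≤ (Real.exp (s/R) * ((d+2).factorial : ℝ)) * R^(d+2) :=
              mul_le_mul_of_nonneg_right h2 (by positivity)
          _ = ((d+2).factorial : ℝ) * R^(d+2) * Real.exp (s/R) := by ring
      have hexp1 : (1:ℝ) ≤ Real.exp (s/R) := Real.one_le_exp (by positivity)
      calc s * (1+s)^(d+1) ≤ (2:ℝ)^(d+2) * (1 + s^(d+2)) := le_trans hp1 hp2
        _ ≤ (2:ℝ)^(d+2) * (Real.exp (s/R) + ((d+2).factorial : ℝ) * R^(d+2) * Real.exp (s/R)) := by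
            apply mul_le_mul_of_nonneg_left ?_ (by positivity)
            linarith [hp3]
        _ = C * Real.exp (s/R) := by rw [hC]; ring
    have hB : s * Real.exp (-(s/R)) ≤ C / (1+s)^(d+1) := by
      rw [le_div_iff₀ hpow_pos, Real.exp_neg, mul_comm s (Real.exp (s/R))⁻¹, mul_assoc,
        inv_mul_le_iff₀ (Real.exp_pos _)]
      linarith [hcore]
    have hnn : ‖‖x‖ * Real.exp (-f x)‖ = s * Real.exp (-f x) := by
      rw [Real.norm_eq_abs, abs_of_nonneg (by positivity)]
    rw [hnn, hrpow]
    calc s * Real.exp (-f x) ≤ s * (Real.exp 1 * Real.exp (-(s/R))) :=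
          mul_le_mul_of_nonneg_left hexp hs0
      _ = Real.exp 1 * (s * Real.exp (-(s/R))) := by ring
      _ ≤ Real.exp 1 * (C / (1+s)^(d+1)) :=
          mul_le_mul_of_nonneg_left hB (Real.exp_pos 1).le
      _ = K * ((1+s)^(d+1))⁻¹ := by rw [hK, div_eq_mul_inv]; ring

end Aux

/-- Initialization bound: if `f` is convex, `f 0 = 0`, `∇f 0 = 0`, `∇f` is
`L`-Lipschitz, `π ∝ exp (-f)` and `m = ∫ ‖x‖ dπ`, then the Gaussian
`μ₀ = N(0, L⁻¹ I_d)` satisfies `R_∞(μ₀ ‖ π) ≤ 2 + (d/2) ln (m² L)`,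
i.e. `ln (dμ₀/dπ) ≤ 2 + (d/2) ln (m² L)` π-almost everywhere. -/
theorem renyi_infinity_initialization
    (d : ℕ) (L : ℝ) (hL : 0 < L)
    (f : EuclideanSpace ℝ (Fin d) → ℝ)
    (hconv : ConvexOn ℝ univ f)
    (hf0 : f 0 = 0) (hgrad0 : gradient f 0 = 0)
    (hlip : ∀ x y, ‖gradient f x - gradient f y‖ ≤ L * ‖x - y‖)
    (Z : ℝ) (hZ : Z = ∫ x, Real.exp (-f x)) (hZpos : 0 < Z)
    (P : Measure (EuclideanSpace ℝ (Fin d)))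
    (hP : P = volume.withDensity (fun x => ENNReal.ofReal (Real.exp (-f x) / Z)))
    (m : ℝ) (hm : m = ∫ x, ‖x‖ * (Real.exp (-f x) / Z))
    (μ₀dens : EuclideanSpace ℝ (Fin d) → ℝ)
    (hμ₀ : μ₀dens = fun x => (L / (2 * Real.pi)) ^ ((d : ℝ) / 2) *
      Real.exp (-L * ‖x‖ ^ 2 / 2)) :
    ∀ᵐ x ∂P, Real.log (μ₀dens x / (Real.exp (-f x) / Z)) ≤
      2 + (d : ℝ) / 2 * Real.log (m ^ 2 * L) := by
  have hfcont : Continuous f := continuousOn_univ.1 (hconv.continuousOn isOpen_univ)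
  have hint : Integrable (fun x : EuclideanSpace ℝ (Fin d) => Real.exp (-f x)) := by
    by_contra h
    rw [hZ, integral_undef h] at hZpos
    exact lt_irrefl 0 hZpos
  have hsub := subgrad_all hL hconv hlip
  have hfnn : ∀ y : EuclideanSpace ℝ (Fin d), 0 ≤ f y := by
    intro y
    have h := hsub 0 y
    rw [hgrad0, hf0, inner_zero_left, add_zero] at h
    exact h
  have hfquad := f_le_quad hL hf0 hgrad0 hlip hsub
  have hbase : (0:ℝ) < L / (2*π) := by positivity
  -- key constant inequality
  have hkey : (d:ℝ)/2 * Real.log (L/(2*π)) + Real.log Z ≤ 2 + (d:ℝ)/2 * Real.log (m^2*L) := by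
    rcases Nat.eq_zero_or_pos d with hd0 | hdpos
    · subst hd0
      simp only [Nat.cast_zero, zero_div, zero_mul, add_zero, zero_add]
      have hZ1 : Z = 1 := by
        rw [hZ]
        have hall : (fun x : EuclideanSpace ℝ (Fin 0) => Real.exp (-f x)) = fun _ => 1 := by
          funext y
          rw [Subsingleton.elim y 0, hf0]
          simp
        rw [hall, integral_const, smul_eq_mul, mul_one]
        have h1 : (volume : Measure (Fin 0 → ℝ)) univ = 1 := by
          rw [MeasureTheory.volume_pi, Measure.pi_univ]
          simp
        have hpre := (EuclideanSpace.volume_preserving_symm_measurableEquiv_toLp (Fin 0)).measure_preimage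
          (MeasurableSet.univ.nullMeasurableSet)
        have huniv : (volume : Measure (EuclideanSpace ℝ (Fin 0))) univ = 1 := by
          simpa [h1] using hpre
        rw [Measure.real, huniv]
        simp
      rw [hZ1, Real.log_one]
      norm_num
    · -- d ≥ 1
      haveI : Nontrivial (EuclideanSpace ℝ (Fin d)) := by
        refine ⟨⟨EuclideanSpace.single (⟨0, hdpos⟩ : Fin d) (1:ℝ), 0, fun h => ?_⟩⟩
        have : (EuclideanSpace.single (⟨0, hdpos⟩ : Fin d) (1:ℝ)) ⟨0, hdpos⟩ = (0 : EuclideanSpace ℝ (Fin d)) ⟨0, hdpos⟩ := by rw [h]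
        rw [EuclideanSpace.single_apply] at this
        simp at this
      obtain ⟨R, hRpos, hR⟩ := sublevel_bdd hconv hfcont hf0 hint
      have hlb := f_lin_lb hconv hf0 hfnn hRpos hR
      have hIint : Integrable (fun x : EuclideanSpace ℝ (Fin d) => ‖x‖ * Real.exp (-f x)) :=
        integ_norm_exp hfcont hRpos hlb
      have hIpos : 0 < ∫ x : EuclideanSpace ℝ (Fin d), ‖x‖ * Real.exp (-f x) := by
        rw [integral_pos_iff_support_of_nonneg (fun y => by positivity) hIint]
        have hsupp : Function.support (fun x : EuclideanSpace ℝ (Fin d) => ‖x‖ * Real.exp (-f x))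
            = {(0 : EuclideanSpace ℝ (Fin d))}ᶜ := by
          ext y
          simp [Function.support, Real.exp_ne_zero, norm_eq_zero]
        rw [hsupp]
        have hball1 : 0 < volume (Metric.ball (0 : EuclideanSpace ℝ (Fin d)) 1) :=
          Metric.measure_ball_pos volume 0 one_pos
        have hcover : volume (Metric.ball (0 : EuclideanSpace ℝ (Fin d)) 1) ≤
            volume ({(0 : EuclideanSpace ℝ (Fin d))} : Set (EuclideanSpace ℝ (Fin d))) +
            volume ({(0 : EuclideanSpace ℝ (Fin d))}ᶜ : Set (EuclideanSpace ℝ (Fin d))) := by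
          refine le_trans (measure_mono ?_) (measure_union_le _ _)
          intro y _
          by_cases hy : y = 0
          · exact Or.inl (by simp [hy])
          · exact Or.inr hy
        rw [measure_singleton, zero_add] at hcover
        exact lt_of_lt_of_le hball1 hcover
      have hmI : m = (∫ x : EuclideanSpace ℝ (Fin d), ‖x‖ * Real.exp (-f x)) / Z := by
        rw [hm, show (fun x : EuclideanSpace ℝ (Fin d) => ‖x‖ * (Real.exp (-f x)/Z))
          = fun x : EuclideanSpace ℝ (Fin d) => (‖x‖ * Real.exp (-f x))/Z from funext fun y => by ring]
        exact integral_div Z _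
      have hmpos : 0 < m := by
        rw [hmI]; exact div_pos hIpos hZpos
      -- Markov
      set B : Set (EuclideanSpace ℝ (Fin d)) := Metric.ball 0 (2*m) with hB
      set V : ℝ := (volume B).toReal with hV
      have hBmeas : MeasurableSet B := measurableSet_ball
      have hsplit : (∫ x in B, Real.exp (-f x)) + (∫ x in Bᶜ, Real.exp (-f x)) = Z := by
        rw [hZ]
        exact integral_add_compl hBmeas hint
      have hVle : ∫ x in B, Real.exp (-f x) ≤ V := by
        have h1 : ∫ x in B, Real.exp (-f x) ≤ ∫ _x in B, (1:ℝ) := by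
          refine setIntegral_mono_on hint.integrableOn
            (integrableOn_const measure_ball_lt_top.ne) hBmeas fun y _ => ?_
          exact Real.exp_le_one_iff.2 (by linarith [hfnn y])
        simpa [setIntegral_const, smul_eq_mul, hV, Measure.real] using h1
      have htail : 2*m * (∫ x in Bᶜ, Real.exp (-f x)) ≤ ∫ x in Bᶜ, ‖x‖ * Real.exp (-f x) := by
        rw [← integral_const_mul]
        refine setIntegral_mono_on ((hint.const_mul (2*m)).integrableOn)
          hIint.integrableOn hBmeas.compl fun y hy => ?_
        have h2 : 2*m ≤ ‖y‖ := by
          have := hy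
          simp only [hB, mem_compl_iff, Metric.mem_ball, dist_zero_right, not_lt] at this
          exact this
        exact mul_le_mul_of_nonneg_right h2 (Real.exp_pos _).le
      have htail2 : ∫ x in Bᶜ, ‖x‖ * Real.exp (-f x) ≤
          ∫ x : EuclideanSpace ℝ (Fin d), ‖x‖ * Real.exp (-f x) :=
        setIntegral_le_integral hIint (Filter.Eventually.of_forall fun y => by positivity)
      have hIeq : (∫ x : EuclideanSpace ℝ (Fin d), ‖x‖ * Real.exp (-f x)) = m * Z := by
        rw [hmI]; field_simp
      have hintBnn : 0 ≤ ∫ x in B, Real.exp (-f x) :=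
        setIntegral_nonneg hBmeas fun y _ => (Real.exp_pos _).le
      have hZ2V : Z ≤ 2 * V := by nlinarith
      have hVpos : 0 < V := by linarith
      -- volume formula
      haveI : Nonempty (Fin d) := ⟨⟨0, hdpos⟩⟩
      have hG : 0 < Real.Gamma ((d:ℝ)/2+1) := Real.Gamma_pos_of_pos (by positivity)
      have hvol : V = (2*m)^d * (Real.sqrt π ^ d / Real.Gamma ((d:ℝ)/2 + 1)) := by
        rw [hV, hB, EuclideanSpace.volume_ball, Fintype.card_fin, ENNReal.toReal_mul,
          ENNReal.toReal_pow, ENNReal.toReal_ofReal (by positivity),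
          ENNReal.toReal_ofReal (by positivity)]
      -- numeric inequality
      have hsqpi : (Real.sqrt π)^d = π ^ ((d:ℝ)/2) := by
        rw [Real.sqrt_eq_rpow, ← Real.rpow_natCast (π ^ ((1:ℝ)/2)) d,
          ← Real.rpow_mul Real.pi_pos.le]
        congr 1
        ring
      have h2d : (2:ℝ)^d = (2:ℝ)^((d:ℝ)/2) * (2:ℝ)^((d:ℝ)/2) := by
        rw [← Real.rpow_natCast (2:ℝ) d, ← Real.rpow_add (by norm_num : (0:ℝ)<2)]
        norm_num
      have hmd : (m^2 : ℝ) ^ ((d:ℝ)/2) = m^d := by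
        rw [← Real.rpow_natCast m 2, ← Real.rpow_mul hmpos.le,
          show ((2:ℕ):ℝ) * ((d:ℝ)/2) = ((d:ℕ):ℝ) by push_cast; ring, Real.rpow_natCast]
      have hnum : 2*V ≤ Real.exp 2 * (2*π*m^2) ^ ((d:ℝ)/2) := by
        have hrhs : (2*π*m^2 : ℝ) ^ ((d:ℝ)/2)
            = (2:ℝ)^((d:ℝ)/2) * π^((d:ℝ)/2) * m^d := by
          rw [Real.mul_rpow (by positivity) (by positivity),
            Real.mul_rpow (by positivity) Real.pi_pos.le, hmd]
        have hexp2 : Real.exp 2 = Real.exp 1 ^ 2 := by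
          rw [show (2:ℝ) = 1 + 1 by norm_num, Real.exp_add]
          ring
        rw [hrhs, hvol, mul_pow, hsqpi, hexp2, h2d]
        have hgb := gamma_bd d
        calc 2 * ((2:ℝ)^((d:ℝ)/2) * (2:ℝ)^((d:ℝ)/2) * m^d * (π^((d:ℝ)/2) / Real.Gamma ((d:ℝ)/2+1)))
            = (2 * (2:ℝ)^((d:ℝ)/2)) * ((2:ℝ)^((d:ℝ)/2) * m^d * π^((d:ℝ)/2))
              / Real.Gamma ((d:ℝ)/2+1) := by ring
          _ ≤ (Real.exp 1^2 * Real.Gamma ((d:ℝ)/2+1)) * ((2:ℝ)^((d:ℝ)/2) * m^d * π^((d:ℝ)/2))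
              / Real.Gamma ((d:ℝ)/2+1) := by
              gcongr
          _ = Real.exp 1^2 * ((2:ℝ)^((d:ℝ)/2) * π^((d:ℝ)/2) * m^d) := by
              field_simp
      -- conclude via logs
      have hlogZ : Real.log Z ≤ 2 + (d:ℝ)/2 * Real.log (2*π*m^2) := by
        have h1 : Real.log Z ≤ Real.log (Real.exp 2 * (2*π*m^2)^((d:ℝ)/2)) :=
          Real.log_le_log hZpos (le_trans hZ2V hnum)
        rw [Real.log_mul (Real.exp_ne_zero 2) (by positivity), Real.log_exp,
          Real.log_rpow (by positivity)] at h1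
        exact h1
      have hsplit2 : Real.log (m^2*L) = Real.log (2*π*m^2) + Real.log (L/(2*π)) := by
        rw [← Real.log_mul (by positivity) (by positivity)]
        congr 1
        field_simp
      rw [hsplit2]
      linarith [hlogZ]
  -- pointwise bound
  refine Filter.Eventually.of_forall fun x => ?_
  have hμx : μ₀dens x = (L / (2 * π)) ^ ((d : ℝ) / 2) * Real.exp (-L * ‖x‖ ^ 2 / 2) := by
    rw [hμ₀]
  have hlog1 : Real.log (μ₀dens x / (Real.exp (-f x) / Z)) =
      (d:ℝ)/2 * Real.log (L/(2*π)) + (-L * ‖x‖^2/2) + f x + Real.log Z := by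
    rw [hμx, Real.log_div (by positivity) (by positivity),
      Real.log_mul (by positivity) (Real.exp_ne_zero _), Real.log_rpow hbase, Real.log_exp,
      Real.log_div (Real.exp_ne_zero _) hZpos.ne', Real.log_exp]
    ring
  rw [hlog1]
  have hq := hfquad x
  linarith [hkey]
end
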